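/- arXiv:1911.00272 — 9 statements merged into one kernel-verified Lean document; each statement's English description precedes it below -/
import Mathlib

section
/- A square row-stochastic matrix T satisfies |det(T)| = 1 if and only if T is a permutation matrix. -/
/-- A matrix is a permutation matrix if there is a permutation `π` with
`T c (π c) = 1` for all `c` and all other entries `0`. -/
def IsPermMatrix {C : ℕ} (T : Matrix (Fin C) (Fin C) ℝ) : Prop :=
  ∃ π : Equiv.Perm (Fin C), ∀ i j, T i j = if π i = j then 1 else 0

/-- A square row-stochastic matrix `T` satisfies `|det T| = 1`
iff `T` is a permutation matrix. -/
theorem abs_det_eq_one_iff_perm_of_row_stochastic {C : ℕ} (T : Matrix (Fin C) (Fin C) ℝ)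
    (hrange : ∀ i j, 0 ≤ T i j ∧ T i j ≤ 1)
    (hrow : ∀ i, ∑ j, T i j = 1) :
    |T.det| = 1 ↔ IsPermMatrix T := by
  constructor
  · intro hdet
    have h0 : ∀ f : Fin C → Fin C, 0 ≤ ∏ i, T i (f i) :=
      fun f => Finset.prod_nonneg fun i _ => (hrange i (f i)).1
    have hdet' : T.det = ∑ σ : Equiv.Perm (Fin C),
        ((Equiv.Perm.sign σ : ℤ) : ℝ) * ∏ i, T i (σ i) := by
      rw [← Matrix.det_transpose, Matrix.det_apply']
      simp [Matrix.transpose_apply]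
    have habs : |T.det| ≤ ∑ σ : Equiv.Perm (Fin C), ∏ i, T i (σ i) := by
      rw [hdet']
      refine (Finset.abs_sum_le_sum_abs _ _).trans_eq ?_
      refine Finset.sum_congr rfl fun σ _ => ?_
      rw [abs_mul, abs_of_nonneg (h0 σ)]
      rcases Int.units_eq_one_or (Equiv.Perm.sign σ) with h | h <;> simp [h]
    have hfuncs : ∑ f : Fin C → Fin C, ∏ i, T i (f i) = 1 := by
      have := Finset.prod_univ_sum (fun _ : Fin C => (Finset.univ : Finset (Fin C)))
        (fun i j => T i j)
      rw [Fintype.piFinset_univ] at this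
      rw [← this]
      simp [hrow]
    have hinj : Function.Injective (fun σ : Equiv.Perm (Fin C) => (σ : Fin C → Fin C)) :=
      fun a b h => Equiv.ext (congrFun h)
    set S : Finset (Fin C → Fin C) :=
      Finset.univ.image (fun σ : Equiv.Perm (Fin C) => (σ : Fin C → Fin C)) with hS
    have hperm_sum : ∑ σ : Equiv.Perm (Fin C), ∏ i, T i (σ i)
        = ∑ f ∈ S, ∏ i, T i (f i) := by
      rw [hS, Finset.sum_image (fun a _ b _ h => hinj h)]
    have hle : ∑ σ : Equiv.Perm (Fin C), ∏ i, T i (σ i)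
        ≤ ∑ f : Fin C → Fin C, ∏ i, T i (f i) := by
      rw [hperm_sum]
      exact Finset.sum_le_sum_of_subset_of_nonneg (Finset.subset_univ _)
        (fun f _ _ => h0 f)
    have hP1 : ∑ σ : Equiv.Perm (Fin C), ∏ i, T i (σ i) = 1 :=
      le_antisymm (hfuncs ▸ hle) (hdet ▸ habs)
    have hcompl : ∑ f ∈ Finset.univ \ S, ∏ i, T i (f i) = 0 := by
      have := Finset.sum_sdiff (s₁ := S) (s₂ := Finset.univ)
        (f := fun f : Fin C → Fin C => ∏ i, T i (f i)) (Finset.subset_univ _)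
      rw [← hperm_sum, hP1] at this
      rw [hfuncs] at this
      linarith
    have hzero : ∀ f : Fin C → Fin C, ¬ Function.Injective f → ∏ i, T i (f i) = 0 := by
      intro f hf
      have hmem : f ∈ Finset.univ \ S := by
        rw [Finset.mem_sdiff]
        refine ⟨Finset.mem_univ _, ?_⟩
        intro hfS
        rw [hS, Finset.mem_image] at hfS
        obtain ⟨σ, _, hσ⟩ := hfS
        exact hf (hσ ▸ σ.injective)
      exact (Finset.sum_eq_zero_iff_of_nonneg (fun g _ => h0 g)).1 hcompl f hmem
    obtain ⟨σ, _, hσne⟩ : ∃ σ ∈ (Finset.univ : Finset (Equiv.Perm (Fin C))),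
        ∏ i, T i (σ i) ≠ 0 := by
      apply Finset.exists_ne_zero_of_sum_ne_zero
      rw [hP1]; norm_num
    have hσpos : ∀ k, 0 < T k (σ k) := by
      intro k
      rcases (hrange k (σ k)).1.lt_or_eq with h | h
      · exact h
      · exact absurd (Finset.prod_eq_zero (Finset.mem_univ k) h.symm) hσne
    have hoff : ∀ i j, σ i ≠ j → T i j = 0 := by
      intro i j hne
      by_contra hTij
      have hTpos : 0 < T i j := lt_of_le_of_ne (hrange i j).1 (Ne.symm hTij)
      set f : Fin C → Fin C := fun m => if m = i then j else σ m with hfdef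
      have hfnotinj : ¬ Function.Injective f := by
        intro hf
        have hne2 : σ.symm j ≠ i := by
          intro h
          apply hne
          rw [← h]; simp
        have h1 : f i = j := by simp [hfdef]
        have h2 : f (σ.symm j) = j := by simp [hfdef, hne2]
        have := hf (h1.trans h2.symm)
        exact hne2 this.symm
      have hprodpos : 0 < ∏ m, T m (f m) := by
        apply Finset.prod_pos
        intro m _
        by_cases hm : m = i
        · subst hm; simpa [hfdef] using hTpos
        · simpa [hfdef, hm] using hσpos m
      exact absurd (hzero f hfnotinj) (ne_of_gt hprodpos)
    refine ⟨σ, fun i j => ?_⟩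
    by_cases h : σ i = j
    · subst h
      simp only [if_pos rfl]
      have h1 := hrow i
      rw [← Finset.add_sum_erase _ _ (Finset.mem_univ (σ i))] at h1
      have hrest : ∑ j ∈ Finset.univ.erase (σ i), T i j = 0 :=
        Finset.sum_eq_zero fun j hj => hoff i j (Finset.ne_of_mem_erase hj).symm
      rw [hrest, add_zero] at h1
      exact h1
    · simp [h, hoff i j h]
  · rintro ⟨π, hπ⟩
    have hT : T = π.permMatrix ℝ := by
      ext i j
      rw [hπ]
      simp [Equiv.Perm.permMatrix, PEquiv.toMatrix, Equiv.toPEquiv, eq_comm]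
    rw [hT, Matrix.det_permutation]
    rcases Int.units_eq_one_or π.sign with h | h <;> simp [h]
end

section
/- For any random variables X, Y with common finite support of size C, DMI(X;Y) ≤ (1/C)^C. -/
open MeasureTheory

/-- The joint distribution matrix of two random variables valued in `Fin C`. -/
noncomputable def jointMatrix {Ω : Type*} [MeasurableSpace Ω] (μ : Measure Ω) {C : ℕ}
    (X Y : Ω → Fin C) : Matrix (Fin C) (Fin C) ℝ :=
  Matrix.of fun x y => (μ {ω | X ω = x ∧ Y ω = y}).toReal

/-- Determinant based mutual information: `DMI(X;Y) = |det U_{X,Y}|`. -/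
noncomputable def DMI {Ω : Type*} [MeasurableSpace Ω] (μ : Measure Ω) {C : ℕ}
    (X Y : Ω → Fin C) : ℝ :=
  |(jointMatrix μ X Y).det|

/-- For a nonnegative matrix, `|det| ≤` product of column sums. -/
lemma abs_det_le_prod_col_sums {n : ℕ} (A : Matrix (Fin n) (Fin n) ℝ)
    (h : ∀ i j, 0 ≤ A i j) : |A.det| ≤ ∏ j, ∑ i, A i j := by
  rw [Matrix.det_apply']
  calc |∑ σ : Equiv.Perm (Fin n), (Equiv.Perm.sign σ : ℝ) * ∏ i, A (σ i) i|
      ≤ ∑ σ : Equiv.Perm (Fin n), |(Equiv.Perm.sign σ : ℝ) * ∏ i, A (σ i) i| :=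
        Finset.abs_sum_le_sum_abs _ _
    _ = ∑ σ : Equiv.Perm (Fin n), ∏ i, A (σ i) i := by
        refine Finset.sum_congr rfl fun σ _ => ?_
        rcases Int.units_eq_one_or (Equiv.Perm.sign σ) with hs | hs <;>
          simp [hs, abs_of_nonneg (Finset.prod_nonneg fun i _ => h _ _)]
    _ = ∑ f ∈ Finset.univ.image (fun σ : Equiv.Perm (Fin n) => ⇑σ),
          ∏ i, A (f i) i := by
        rw [Finset.sum_image]
        intro a _ b _ hab
        exact Equiv.coe_fn_injective hab
    _ ≤ ∑ f : Fin n → Fin n, ∏ i, A (f i) i := by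
        apply Finset.sum_le_sum_of_subset_of_nonneg (Finset.subset_univ _)
        intro f _ _
        exact Finset.prod_nonneg fun i _ => h _ _
    _ = ∏ i, ∑ j, A j i := by
        rw [Finset.prod_univ_sum]
        rw [← Fintype.piFinset_univ]

/-- AM-GM: a product of `n` nonnegative reals with sum `≤ 1` is at most `(1/n)^n`. -/
lemma prod_le_of_sum_le {n : ℕ} (hn : 0 < n) (z : Fin n → ℝ) (hz : ∀ i, 0 ≤ z i)
    (hs : ∑ i, z i ≤ 1) : ∏ i, z i ≤ (1 / (n : ℝ)) ^ n := by
  have hn' : (0 : ℝ) < n := Nat.cast_pos.mpr hn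
  have hgm := Real.geom_mean_le_arith_mean_weighted Finset.univ
      (fun _ : Fin n => 1 / (n : ℝ)) z
      (fun i _ => by positivity)
      (by simp [Finset.sum_const, Finset.card_univ]; field_simp)
      (fun i _ => hz i)
  have h1 : ∑ i : Fin n, (1 / (n : ℝ)) * z i ≤ 1 / n := by
    rw [← Finset.mul_sum]
    calc (1 / (n : ℝ)) * ∑ i, z i ≤ (1 / n) * 1 :=
      mul_le_mul_of_nonneg_left hs (by positivity)
    _ = 1 / n := mul_one _
  have h2 : ∏ i, z i ^ (1 / (n : ℝ)) ≤ 1 / n := hgm.trans h1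
  have h3 : (∏ i, z i ^ (1 / (n : ℝ))) ^ n = ∏ i, z i := by
    rw [← Finset.prod_pow]
    refine Finset.prod_congr rfl fun i _ => ?_
    rw [← Real.rpow_natCast (z i ^ (1 / (n : ℝ))) n, ← Real.rpow_mul (hz i)]
    rw [one_div, inv_mul_cancel₀ (ne_of_gt hn'), Real.rpow_one]
  calc ∏ i, z i = (∏ i, z i ^ (1 / (n : ℝ))) ^ n := h3.symm
    _ ≤ (1 / (n : ℝ)) ^ n := by
        apply pow_le_pow_left₀ _ h2
        exact Finset.prod_nonneg fun i _ => Real.rpow_nonneg (hz i) _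

/-- for any random variables `X, Y` with common finite support of size `C`,
`DMI(X;Y) ≤ (1/C)^C`. -/
theorem DMI_le_bound {Ω : Type*} [MeasurableSpace Ω] (μ : Measure Ω)
    [IsProbabilityMeasure μ] {C : ℕ} (X Y : Ω → Fin C)
    (hX : Measurable X) (hY : Measurable Y) :
    DMI μ X Y ≤ (1 / (C : ℝ)) ^ C := by
  rcases Nat.eq_zero_or_pos C with hC | hC
  · subst hC
    simp [DMI, Matrix.det_isEmpty]
  -- entries are nonnegative
  have hnn : ∀ i j, 0 ≤ jointMatrix μ X Y i j := fun i j => ENNReal.toReal_nonneg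
  -- total sum of entries is at most 1
  set A : Fin C × Fin C → Set Ω := fun p => {ω | X ω = p.1 ∧ Y ω = p.2} with hA
  have hmeas : ∀ p, MeasurableSet (A p) := fun p =>
    (hX (measurableSet_singleton p.1)).inter (hY (measurableSet_singleton p.2))
  have hdisj : Pairwise (Function.onFun Disjoint A) := by
    intro p q hpq
    rw [Function.onFun, Set.disjoint_left]
    rintro ω ⟨h1, h2⟩ ⟨h3, h4⟩
    exact hpq (Prod.ext (h1.symm.trans h3) (h2.symm.trans h4))
  have hsum : ∑ p : Fin C × Fin C, μ (A p) ≤ 1 := by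
    rw [← tsum_fintype (L := SummationFilter.unconditional _), ← measure_iUnion hdisj hmeas]
    exact prob_le_one
  have hne : ∀ p : Fin C × Fin C, μ (A p) ≠ ⊤ := fun p => measure_ne_top μ _
  have htotal : ∑ p : Fin C × Fin C, (μ (A p)).toReal ≤ 1 := by
    rw [← ENNReal.toReal_sum (fun p _ => hne p)]
    exact ENNReal.toReal_le_of_le_ofReal one_pos.le (by simpa using hsum)
  -- column sums
  have hcolsum : ∑ j, ∑ i, jointMatrix μ X Y i j ≤ 1 := by
    calc ∑ j, ∑ i, jointMatrix μ X Y i j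
        = ∑ p : Fin C × Fin C, (μ (A p)).toReal := by
          rw [Fintype.sum_prod_type]
          rw [Finset.sum_comm]
          rfl
      _ ≤ 1 := htotal
  calc DMI μ X Y ≤ ∏ j, ∑ i, jointMatrix μ X Y i j :=
        abs_det_le_prod_col_sums _ hnn
    _ ≤ (1 / (C : ℝ)) ^ C :=
        prod_le_of_sum_le hC _ (fun j => Finset.sum_nonneg fun i _ => hnn i j) hcolsum
end

section
/- Relative invariance of DMI: if X' is conditionally independent of Y given X (all three variables with the same finite support C), then DMI(X';Y) = DMI(X;Y) · |det(U_{X'|X})|, where U_{X'|X} is the transition matrix with entries P[X'=x' | X=x]. -/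
open MeasureTheory

/-- The transition matrix `U_{X'|X}`: entry `(x, x')` is `P[X' = x' | X = x]`. -/
noncomputable def transMatrix {Ω : Type*} [MeasurableSpace Ω] (μ : Measure Ω) {C : ℕ}
    (X X' : Ω → Fin C) : Matrix (Fin C) (Fin C) ℝ :=
  Matrix.of fun x x' => (μ {ω | X' ω = x' ∧ X ω = x}).toReal / (μ {ω | X ω = x}).toReal


lemma entry_eq {Ω : Type*} [MeasurableSpace Ω] (μ : Measure Ω)
    [IsProbabilityMeasure μ] {C : ℕ} (X X' Y : Ω → Fin C)
    (hci : ∀ x x' y,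
      μ {ω | X ω = x} * μ {ω | X' ω = x' ∧ Y ω = y ∧ X ω = x} =
        μ {ω | X' ω = x' ∧ X ω = x} * μ {ω | Y ω = y ∧ X ω = x})
    (x x' y : Fin C) :
    (μ {ω | X' ω = x' ∧ Y ω = y ∧ X ω = x}).toReal =
      transMatrix μ X X' x x' * (μ {ω | X ω = x ∧ Y ω = y}).toReal := by
  have hswap : {ω | X ω = x ∧ Y ω = y} = {ω | Y ω = y ∧ X ω = x} := by
    ext ω; exact and_comm
  rw [hswap]
  by_cases h : μ {ω | X ω = x} = 0
  · have h1 : μ {ω | X' ω = x' ∧ Y ω = y ∧ X ω = x} = 0 :=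
      measure_mono_null (fun ω hω => hω.2.2) h
    have h2 : μ {ω | X' ω = x' ∧ X ω = x} = 0 :=
      measure_mono_null (fun ω hω => hω.2) h
    simp [transMatrix, h1, h2]
  · have key := hci x x' y
    have ha : μ {ω | X ω = x} ≠ ⊤ := measure_ne_top μ _
    have hb : μ {ω | X' ω = x' ∧ Y ω = y ∧ X ω = x} ≠ ⊤ := measure_ne_top μ _
    have hc : μ {ω | X' ω = x' ∧ X ω = x} ≠ ⊤ := measure_ne_top μ _
    have hd : μ {ω | Y ω = y ∧ X ω = x} ≠ ⊤ := measure_ne_top μ _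
    have key' : (μ {ω | X ω = x}).toReal * (μ {ω | X' ω = x' ∧ Y ω = y ∧ X ω = x}).toReal =
        (μ {ω | X' ω = x' ∧ X ω = x}).toReal * (μ {ω | Y ω = y ∧ X ω = x}).toReal := by
      rw [← ENNReal.toReal_mul, ← ENNReal.toReal_mul, key]
    have ha0 : (μ {ω | X ω = x}).toReal ≠ 0 := by
      simp [ENNReal.toReal_ne_zero, h, ha]
    simp only [transMatrix, Matrix.of_apply]
    field_simp
    linarith [key']

lemma joint_decomp {Ω : Type*} [MeasurableSpace Ω] (μ : Measure Ω)
    [IsProbabilityMeasure μ] {C : ℕ} (X X' Y : Ω → Fin C)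
    (hX : Measurable X) (hX' : Measurable X') (hY : Measurable Y)
    (x' y : Fin C) :
    (μ {ω | X' ω = x' ∧ Y ω = y}).toReal =
      ∑ x : Fin C, (μ {ω | X' ω = x' ∧ Y ω = y ∧ X ω = x}).toReal := by
  have hset : {ω | X' ω = x' ∧ Y ω = y} = ⋃ x : Fin C, {ω | X' ω = x' ∧ Y ω = y ∧ X ω = x} := by
    ext ω; simp [and_assoc]
  have hmeas : ∀ x : Fin C, MeasurableSet {ω | X' ω = x' ∧ Y ω = y ∧ X ω = x} := by
    intro x
    exact (hX' (measurableSet_singleton x')).inter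
      ((hY (measurableSet_singleton y)).inter (hX (measurableSet_singleton x)))
  have hdisj : Pairwise (Function.onFun Disjoint
      fun x : Fin C => {ω | X' ω = x' ∧ Y ω = y ∧ X ω = x}) := by
    intro i j hij
    refine Set.disjoint_left.mpr fun ω hi hj => hij ?_
    rw [← hi.2.2, ← hj.2.2]
  rw [hset, measure_iUnion hdisj hmeas, tsum_fintype, ENNReal.toReal_sum]
  intro x _
  exact measure_ne_top μ _

/-- relative invariance of DMI: if `X'` is conditionally independent of `Y`
given `X`, then `DMI(X';Y) = DMI(X;Y) · |det U_{X'|X}|`. -/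
theorem DMI_relative_invariance {Ω : Type*} [MeasurableSpace Ω] (μ : Measure Ω)
    [IsProbabilityMeasure μ] {C : ℕ} (X X' Y : Ω → Fin C)
    (hX : Measurable X) (hX' : Measurable X') (hY : Measurable Y)
    (hci : ∀ x x' y,
      μ {ω | X ω = x} * μ {ω | X' ω = x' ∧ Y ω = y ∧ X ω = x} =
        μ {ω | X' ω = x' ∧ X ω = x} * μ {ω | Y ω = y ∧ X ω = x}) :
    DMI μ X' Y = DMI μ X Y * |(transMatrix μ X X').det| := by
  have hmat : jointMatrix μ X' Y = (transMatrix μ X X').transpose * jointMatrix μ X Y := by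
    ext x' y
    rw [Matrix.mul_apply]
    simp only [jointMatrix, Matrix.of_apply, Matrix.transpose_apply]
    rw [joint_decomp μ X X' Y hX hX' hY x' y]
    exact Finset.sum_congr rfl fun x _ => entry_eq μ X X' Y hci x x' y
  unfold DMI
  rw [hmat, Matrix.det_mul, Matrix.det_transpose, abs_mul, mul_comm]
end

section
/- Information monotonicity of DMI: if X' is conditionally independent of Y given X (all with common finite support), then DMI(X';Y) ≤ DMI(X;Y). -/
open MeasureTheory

/-- Sum over permutations of products is at most product of row sums (nonneg entries). -/
lemma sum_perm_le_prod_sum {n : ℕ} (f : Fin n → Fin n → ℝ) (h0 : ∀ i j, 0 ≤ f i j) :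
    ∑ σ : Equiv.Perm (Fin n), ∏ i, f i (σ i) ≤ ∏ i, ∑ j, f i j := by
  rw [Finset.prod_univ_sum]
  rw [Fintype.piFinset_univ]
  have himg : (∑ σ : Equiv.Perm (Fin n), ∏ i, f i (σ i)) =
      ∑ p ∈ Finset.univ.image (fun σ : Equiv.Perm (Fin n) => ⇑σ), ∏ i, f i (p i) := by
    rw [Finset.sum_image]
    intro σ _ τ _ h
    exact Equiv.coe_fn_injective h
  rw [himg]
  exact Finset.sum_le_sum_of_subset_of_nonneg (Finset.subset_univ _)
    (fun p _ _ => Finset.prod_nonneg fun i _ => h0 i (p i))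

/-- A matrix with nonnegative entries and row sums at most 1 has |det| ≤ 1. -/
lemma abs_det_le_one_of_rowsum {n : ℕ} (M : Matrix (Fin n) (Fin n) ℝ)
    (h0 : ∀ i j, 0 ≤ M i j) (h1 : ∀ i, ∑ j, M i j ≤ 1) : |M.det| ≤ 1 := by
  rw [← Matrix.det_transpose, Matrix.det_apply']
  have h2 : ∀ σ : Equiv.Perm (Fin n),
      |(Equiv.Perm.sign σ : ℤ) * ∏ i, M.transpose (σ i) i| = ∏ i, M i (σ i) := by
    intro σ
    rw [abs_mul]
    have hsgn : |((Equiv.Perm.sign σ : ℤ) : ℝ)| = 1 := by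
      rcases Int.units_eq_one_or (Equiv.Perm.sign σ) with h | h <;> simp [h]
    have hp : ∏ i, M.transpose (σ i) i = ∏ i, M i (σ i) := by
      simp [Matrix.transpose_apply]
    rw [hsgn, one_mul, hp, abs_of_nonneg (Finset.prod_nonneg fun i _ => h0 _ _)]
  calc |∑ σ : Equiv.Perm (Fin n), ((Equiv.Perm.sign σ : ℤ) : ℝ) * ∏ i, M.transpose (σ i) i|
      ≤ ∑ σ : Equiv.Perm (Fin n), |((Equiv.Perm.sign σ : ℤ) : ℝ) * ∏ i, M.transpose (σ i) i| :=
        Finset.abs_sum_le_sum_abs _ _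
    _ = ∑ σ : Equiv.Perm (Fin n), ∏ i, M i (σ i) := by
        refine Finset.sum_congr rfl fun σ _ => ?_
        exact h2 σ
    _ ≤ ∏ i, ∑ j, M i j := sum_perm_le_prod_sum M h0
    _ ≤ 1 := Finset.prod_le_one (fun i _ => Finset.sum_nonneg fun j _ => h0 i j)
        (fun i _ => h1 i)

/-- Decomposing a measure over the fibers of a finite-valued measurable function. -/
lemma sum_fiber {Ω : Type*} [MeasurableSpace Ω] (μ : Measure Ω) [IsProbabilityMeasure μ]
    {C : ℕ} (Z : Ω → Fin C) (hZ : Measurable Z) (s : Set Ω) (hs : MeasurableSet s) :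
    ∑ z, (μ (s ∩ {ω | Z ω = z})).toReal = (μ s).toReal := by
  have hdis : Pairwise (Function.onFun Disjoint fun z => s ∩ {ω | Z ω = z}) := by
    intro i j hij
    refine Set.disjoint_left.mpr fun ω h1 h2 => hij ?_
    exact h1.2.symm.trans h2.2
  have hm : ∀ z, MeasurableSet (s ∩ {ω | Z ω = z}) :=
    fun z => hs.inter (hZ (measurableSet_singleton z))
  have hU : ⋃ z, s ∩ {ω | Z ω = z} = s := by
    ext ω; simp
  rw [← ENNReal.toReal_sum (fun z _ => (measure_lt_top μ _).ne)]
  congr 1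
  rw [← tsum_fintype (L := SummationFilter.unconditional _), ← measure_iUnion hdis hm, hU]

/-- information monotonicity of DMI: if `X'` is conditionally independent of
`Y` given `X` (all with common finite support), then `DMI(X';Y) ≤ DMI(X;Y)`. -/
theorem DMI_information_monotone {Ω : Type*} [MeasurableSpace Ω] (μ : Measure Ω)
    [IsProbabilityMeasure μ] {C : ℕ} (X X' Y : Ω → Fin C)
    (hX : Measurable X) (hX' : Measurable X') (hY : Measurable Y)
    (hci : ∀ x x' y,
      μ {ω | X ω = x} * μ {ω | X' ω = x' ∧ Y ω = y ∧ X ω = x} =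
        μ {ω | X' ω = x' ∧ X ω = x} * μ {ω | Y ω = y ∧ X ω = x}) :
    DMI μ X' Y ≤ DMI μ X Y := by
  classical
  set J := jointMatrix μ X Y with hJ
  set M : Matrix (Fin C) (Fin C) ℝ := Matrix.of fun x x' =>
    (μ {ω | X' ω = x' ∧ X ω = x}).toReal / (μ {ω | X ω = x}).toReal with hM
  have hfin : ∀ s : Set Ω, μ s ≠ ⊤ := fun s => (measure_lt_top μ s).ne
  -- entries of M are nonnegative
  have hMnn : ∀ x x', 0 ≤ M x x' := fun x x' =>
    div_nonneg ENNReal.toReal_nonneg ENNReal.toReal_nonneg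
  -- row sums of M are at most 1
  have hMrow : ∀ x, ∑ x', M x x' ≤ 1 := by
    intro x
    have hsum : ∑ x', (μ {ω | X' ω = x' ∧ X ω = x}).toReal = (μ {ω | X ω = x}).toReal := by
      have := sum_fiber μ X' hX' {ω | X ω = x} (hX (measurableSet_singleton x))
      rw [← this]
      refine Finset.sum_congr rfl fun x' _ => ?_
      have hset : {ω | X' ω = x' ∧ X ω = x} = {ω | X ω = x} ∩ {ω | X' ω = x'} := by
        ext ω
        exact and_comm
      rw [hset]
    have : ∑ x', M x x' =
        (∑ x', (μ {ω | X' ω = x' ∧ X ω = x}).toReal) / (μ {ω | X ω = x}).toReal := by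
      rw [Finset.sum_div]; rfl
    rw [this, hsum]
    exact div_self_le_one _
  -- factorization J' = Mᵀ * J
  have key : jointMatrix μ X' Y = M.transpose * J := by
    ext x' y
    show (μ {ω | X' ω = x' ∧ Y ω = y}).toReal = ∑ x, M x x' * J x y
    have hterm : ∀ x, M x x' * J x y = (μ {ω | X' ω = x' ∧ Y ω = y ∧ X ω = x}).toReal := by
      intro x
      by_cases hx : μ {ω | X ω = x} = 0
      · have h1 : μ {ω | X' ω = x' ∧ X ω = x} = 0 :=
          measure_mono_null (fun ω h => h.2) hx
        have h2 : μ {ω | X' ω = x' ∧ Y ω = y ∧ X ω = x} = 0 :=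
          measure_mono_null (fun ω h => h.2.2) hx
        simp [hM, h1, h2]
      · have hc' : (μ {ω | X ω = x}).toReal * (μ {ω | X' ω = x' ∧ Y ω = y ∧ X ω = x}).toReal =
            (μ {ω | X' ω = x' ∧ X ω = x}).toReal * (μ {ω | Y ω = y ∧ X ω = x}).toReal := by
          rw [← ENNReal.toReal_mul, ← ENNReal.toReal_mul, hci x x' y]
        have hxne : (μ {ω | X ω = x}).toReal ≠ 0 := by
          simp [ENNReal.toReal_ne_zero, hx, hfin]
        have hsets : {ω | X ω = x ∧ Y ω = y} = {ω | Y ω = y ∧ X ω = x} := by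
          ext ω; exact and_comm
        show (μ {ω | X' ω = x' ∧ X ω = x}).toReal / (μ {ω | X ω = x}).toReal *
            (μ {ω | X ω = x ∧ Y ω = y}).toReal =
            (μ {ω | X' ω = x' ∧ Y ω = y ∧ X ω = x}).toReal
        rw [hsets, div_mul_eq_mul_div, ← hc']
        exact mul_div_cancel_left₀ _ hxne
    rw [Finset.sum_congr rfl fun x _ => hterm x]
    have := sum_fiber μ X hX {ω | X' ω = x' ∧ Y ω = y}
      ((hX' (measurableSet_singleton x')).inter (hY (measurableSet_singleton y)))
    rw [← this]
    refine Finset.sum_congr rfl fun x _ => ?_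
    have hset : {ω | X' ω = x' ∧ Y ω = y ∧ X ω = x} =
        {ω | X' ω = x' ∧ Y ω = y} ∩ {ω | X ω = x} := by
      ext ω
      simp only [Set.mem_inter_iff, Set.mem_setOf_eq]
      tauto
    rw [hset]
  have hdet : |M.det| ≤ 1 := abs_det_le_one_of_rowsum M hMnn hMrow
  rw [DMI, DMI, key, Matrix.det_mul, abs_mul, Matrix.det_transpose]
  exact mul_le_of_le_one_left (abs_nonneg _) hdet
end

section
/- Strict information monotonicity of DMI: if X' is conditionally independent of Y given X, det(U_{X,Y}) ≠ 0, and the transition matrix U_{X'|X} is not a permutation matrix, then DMI(X';Y) < DMI(X;Y). -/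
open MeasureTheory

open Matrix in
/-- A finite-fiber decomposition of a measure (in `toReal` form). -/
lemma measure_toReal_sum_fiber {Ω : Type*} [MeasurableSpace Ω] (μ : Measure Ω)
    [IsProbabilityMeasure μ] {C : ℕ} {Z : Ω → Fin C} (hZ : Measurable Z) {s : Set Ω}
    (hs : MeasurableSet s) :
    (μ s).toReal = ∑ z, (μ (s ∩ {ω | Z ω = z})).toReal := by
  have hunion : s = ⋃ z, s ∩ {ω | Z ω = z} := by ext ω; simp
  have hdisj : Pairwise (Function.onFun Disjoint fun z => s ∩ {ω | Z ω = z}) := by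
    intro a b hab
    simp only [Function.onFun, Set.disjoint_left]
    rintro ω ⟨_, ha⟩ ⟨_, hb⟩
    exact hab (ha.symm.trans hb)
  have hmeas : ∀ z, MeasurableSet (s ∩ {ω | Z ω = z}) := fun z =>
    hs.inter (hZ (measurableSet_singleton z))
  conv_lhs => rw [hunion]
  rw [measure_iUnion hdisj hmeas, tsum_fintype,
    ENNReal.toReal_sum (fun z _ => measure_ne_top μ _)]

open Matrix in
/-- A row-substochastic nonnegative matrix with row sums one that is not a permutation
matrix has `|det| < 1`. -/
lemma stochastic_det_lt_one {C : ℕ} (T : Matrix (Fin C) (Fin C) ℝ)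
    (h0 : ∀ i j, 0 ≤ T i j) (h1 : ∀ i, ∑ j, T i j = 1)
    (hnp : ¬ IsPermMatrix T) : |T.det| < 1 := by
  by_cases hd : T.det = 0
  · rw [hd]; norm_num
  have hex : ∃ σ : Equiv.Perm (Fin C), ∏ i, T i (σ i) ≠ 0 := by
    by_contra h
    push_neg at h
    apply hd
    rw [← Matrix.det_transpose, Matrix.det_apply]
    refine Finset.sum_eq_zero fun σ _ => ?_
    have : ∏ i, Tᵀ (σ i) i = ∏ i, T i (σ i) := by
      simp [Matrix.transpose_apply]
    rw [this, h σ, smul_zero]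
  obtain ⟨σ, hσ⟩ := hex
  have hσpos : ∀ i, 0 < T i (σ i) := by
    intro i
    rcases lt_or_eq_of_le (h0 i (σ i)) with h | h
    · exact h
    · exact absurd (Finset.prod_eq_zero (Finset.mem_univ i) h.symm) hσ
  have hle1 : ∀ i, T i (σ i) ≤ 1 := by
    intro i
    rw [← h1 i]
    exact Finset.single_le_sum (fun j _ => h0 i j) (Finset.mem_univ _)
  have hi₀ : ∃ i₀, T i₀ (σ i₀) < 1 := by
    by_contra h
    push_neg at h
    apply hnp
    refine ⟨σ, fun i j => ?_⟩
    have heq : T i (σ i) = 1 := le_antisymm (hle1 i) (h i)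
    by_cases hj : σ i = j
    · rw [if_pos hj, ← hj, heq]
    · rw [if_neg hj]
      have hsum0 : ∑ k ∈ Finset.univ.erase (σ i), T i k = 0 := by
        have hadd := Finset.add_sum_erase Finset.univ (T i) (Finset.mem_univ (σ i))
        rw [h1 i] at hadd
        linarith [hadd, heq]
      exact (Finset.sum_eq_zero_iff_of_nonneg (fun k _ => h0 i k)).1 hsum0 j
        (Finset.mem_erase.2 ⟨fun hh => hj hh.symm, Finset.mem_univ _⟩)
  obtain ⟨i₀, hi₀⟩ := hi₀
  have hb : ∃ b, b ≠ σ i₀ ∧ 0 < T i₀ b := by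
    by_contra h
    push_neg at h
    have hsum : ∑ j, T i₀ j = T i₀ (σ i₀) := by
      rw [← Finset.add_sum_erase _ _ (Finset.mem_univ (σ i₀))]
      have hz : ∑ j ∈ Finset.univ.erase (σ i₀), T i₀ j = 0 := by
        refine Finset.sum_eq_zero fun j hj => ?_
        exact le_antisymm (h j (Finset.mem_erase.1 hj).1) (h0 i₀ j)
      rw [hz, add_zero]
    rw [h1 i₀] at hsum
    linarith
  obtain ⟨b, hbne, hbpos⟩ := hb
  set f : Fin C → Fin C := fun i => if i = i₀ then b else σ i with hf
  have hfprod : 0 < ∏ i, T i (f i) := by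
    refine Finset.prod_pos fun i _ => ?_
    by_cases h : i = i₀
    · simpa [hf, h] using hbpos
    · simpa [hf, h] using hσpos i
  have hfnotinj : ¬ Function.Injective f := by
    intro hinj
    have hne : σ.symm b ≠ i₀ := by
      intro h
      apply hbne
      rw [← h, Equiv.apply_symm_apply]
    have h1' : f i₀ = b := by simp [hf]
    have h2' : f (σ.symm b) = b := by simp [hf, hne]
    exact hne (hinj (h2'.trans h1'.symm))
  have expand : ∑ g ∈ Fintype.piFinset (fun _ : Fin C => (Finset.univ : Finset (Fin C))),
      ∏ i, T i (g i) = 1 := by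
    refine (Finset.prod_univ_sum (fun _ => Finset.univ) (fun i j => T i j)).symm.trans ?_
    simp [h1]
  set s : Finset (Fin C → Fin C) :=
    Finset.univ.image (fun σ' : Equiv.Perm (Fin C) => ⇑σ') with hs
  have hsum_img : ∑ g ∈ s, ∏ i, T i (g i)
      = ∑ σ' : Equiv.Perm (Fin C), ∏ i, T i (σ' i) :=
    Finset.sum_image (fun a _ b _ h => Equiv.coe_fn_injective h)
  have hf_not : f ∉ s := by
    simp only [hs, Finset.mem_image, Finset.mem_univ, true_and]
    rintro ⟨σ', h⟩
    exact hfnotinj (h ▸ σ'.injective)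
  have hsub : ∑ g ∈ insert f s, ∏ i, T i (g i) ≤ 1 := by
    rw [← expand]
    refine Finset.sum_le_sum_of_subset_of_nonneg ?_ ?_
    · intro g _
      exact Fintype.mem_piFinset.2 fun i => Finset.mem_univ _
    · intro g _ _
      exact Finset.prod_nonneg fun i _ => h0 i (g i)
  rw [Finset.sum_insert hf_not, hsum_img] at hsub
  have habs : |T.det| ≤ ∑ σ' : Equiv.Perm (Fin C), ∏ i, T i (σ' i) := by
    rw [← Matrix.det_transpose, Matrix.det_apply]
    refine (Finset.abs_sum_le_sum_abs _ _).trans ?_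
    refine Finset.sum_le_sum fun σ' _ => ?_
    have hprod : ∏ i, Tᵀ (σ' i) i = ∏ i, T i (σ' i) := by
      simp [Matrix.transpose_apply]
    have hnn : 0 ≤ ∏ i, T i (σ' i) := Finset.prod_nonneg fun i _ => h0 i _
    rcases Int.units_eq_one_or (Equiv.Perm.sign σ') with h | h <;>
      simp [h, hprod, abs_of_nonneg hnn]
  linarith

open Matrix in
/-- strict information monotonicity of DMI: if `X'` is conditionally
independent of `Y` given `X`, `det U_{X,Y} ≠ 0`, and the transition matrix `U_{X'|X}` is
not a permutation matrix, then `DMI(X';Y) < DMI(X;Y)`. -/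
theorem DMI_strict_information_monotone {Ω : Type*} [MeasurableSpace Ω] (μ : Measure Ω)
    [IsProbabilityMeasure μ] {C : ℕ} (X X' Y : Ω → Fin C)
    (hX : Measurable X) (hX' : Measurable X') (hY : Measurable Y)
    (hci : ∀ x x' y,
      μ {ω | X ω = x} * μ {ω | X' ω = x' ∧ Y ω = y ∧ X ω = x} =
        μ {ω | X' ω = x' ∧ X ω = x} * μ {ω | Y ω = y ∧ X ω = x})
    (hdet : (jointMatrix μ X Y).det ≠ 0)
    (hnp : ¬ IsPermMatrix (transMatrix μ X X')) :
    DMI μ X' Y < DMI μ X Y := by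
  have hmeas2 : ∀ (f g : Ω → Fin C), Measurable f → Measurable g →
      ∀ a b, MeasurableSet {ω | f ω = a ∧ g ω = b} := by
    intro f g hf hg a b
    exact (hf (measurableSet_singleton a)).inter (hg (measurableSet_singleton b))
  have hμx : ∀ x, μ {ω | X ω = x} ≠ 0 := by
    intro x hx
    apply hdet
    apply Matrix.det_eq_zero_of_row_eq_zero x
    intro y
    have h0 : μ {ω | X ω = x ∧ Y ω = y} = 0 :=
      measure_mono_null (fun ω h => h.1) hx
    simp [jointMatrix, h0]
  have hμxR : ∀ x, (μ {ω | X ω = x}).toReal ≠ 0 := fun x =>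
    ENNReal.toReal_ne_zero.2 ⟨hμx x, measure_ne_top _ _⟩
  -- factorization
  have hfact : jointMatrix μ X' Y = (transMatrix μ X X')ᵀ * jointMatrix μ X Y := by
    ext x' y
    rw [Matrix.mul_apply]
    simp only [Matrix.transpose_apply, jointMatrix, transMatrix, Matrix.of_apply]
    rw [measure_toReal_sum_fiber μ hX (hmeas2 X' Y hX' hY x' y)]
    refine Finset.sum_congr rfl fun x _ => ?_
    have hset1 : {ω | X' ω = x' ∧ Y ω = y} ∩ {ω | X ω = x}
        = {ω | X' ω = x' ∧ Y ω = y ∧ X ω = x} := by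
      ext ω; simp [Set.mem_inter_iff, and_assoc]
    have hset2 : {ω | X ω = x ∧ Y ω = y} = {ω | Y ω = y ∧ X ω = x} := by
      ext ω; exact and_comm
    have hci' := congrArg ENNReal.toReal (hci x x' y)
    rw [ENNReal.toReal_mul, ENNReal.toReal_mul] at hci'
    rw [hset1, hset2, div_mul_eq_mul_div, eq_div_iff (hμxR x)]
    linarith [hci']
  have hT0 : ∀ i j, 0 ≤ transMatrix μ X X' i j := fun i j =>
    div_nonneg ENNReal.toReal_nonneg ENNReal.toReal_nonneg
  have hT1 : ∀ x, ∑ x', transMatrix μ X X' x x' = 1 := by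
    intro x
    simp only [transMatrix, Matrix.of_apply]
    rw [← Finset.sum_div]
    have hXx : MeasurableSet {ω | X ω = x} := hX (measurableSet_singleton x)
    have hsum : ∑ x', (μ {ω | X' ω = x' ∧ X ω = x}).toReal
        = (μ {ω | X ω = x}).toReal := by
      rw [measure_toReal_sum_fiber μ hX' hXx]
      refine Finset.sum_congr rfl fun x' _ => ?_
      have hseteq : {ω | X ω = x} ∩ {ω | X' ω = x'} = {ω | X' ω = x' ∧ X ω = x} := by
        ext ω; simp [Set.mem_inter_iff, and_comm]
      rw [hseteq]
    rw [hsum, div_self (hμxR x)]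
  have hTdet : |(transMatrix μ X X').det| < 1 :=
    stochastic_det_lt_one _ hT0 hT1 hnp
  have hA : 0 < |(jointMatrix μ X Y).det| := abs_pos.2 hdet
  unfold DMI
  rw [hfact, Matrix.det_mul, abs_mul, Matrix.det_transpose]
  calc |(transMatrix μ X X').det| * |(jointMatrix μ X Y).det|
      < 1 * |(jointMatrix μ X Y).det| := mul_lt_mul_of_pos_right hTdet hA
    _ = |(jointMatrix μ X Y).det| := one_mul _
end

section
/- Unbiased estimator of the joint-distribution determinant: let (c_i^t, c_j^t) for t = 1,...,T be i.i.d. samples from a distribution U on C × C (with C = {1,...,C} and T ≥ C), and let M be the C×C count matrix M(c,c') = Σ_t 1[(c_i^t,c_j^t)=(c,c')]. Then E[det(M)] = binom(T,C)·C! · det(U), where U is viewed as a C×C matrix. -/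
open MeasureTheory

private lemma sum_x_aux {C T : ℕ} (w : Fin C × Fin C → ℝ) (hw : ∑ a, w a = 1)
    (p : Fin C → Fin C × Fin C) (hp : Function.Injective p) (f : Fin C → Fin T) :
    (∑ x : Fin T → Fin C × Fin C,
      (∏ t, w (x t)) * ∏ c, (if x (f c) = p c then (1:ℝ) else 0))
    = if Function.Injective f then ∏ c, w (p c) else 0 := by
  classical
  by_cases hf : Function.Injective f
  · simp only [hf, if_true]
    have hrw : ∀ x : Fin T → Fin C × Fin C,
        (∏ t, w (x t)) * ∏ c, (if x (f c) = p c then (1:ℝ) else 0)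
        = ∏ t, (w (x t) *
            ∏ c, if f c = t then (if x t = p c then (1:ℝ) else 0) else 1) := by
      intro x
      rw [Finset.prod_mul_distrib]
      congr 1
      rw [Finset.prod_comm]
      refine Finset.prod_congr rfl fun c _ => ?_
      have := Finset.prod_ite_eq Finset.univ (f c)
        (fun t => if x t = p c then (1:ℝ) else 0)
      simpa using this.symm
    simp only [hrw]
    rw [← Fintype.piFinset_univ,
      Finset.sum_prod_piFinset (Finset.univ : Finset (Fin C × Fin C))
        (fun t a => w a * ∏ c, if f c = t then (if a = p c then (1:ℝ) else 0) else 1)]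
    have houtside : ∀ t : Fin T, t ∉ Finset.image f Finset.univ →
        (∑ a : Fin C × Fin C,
          w a * ∏ c, if f c = t then (if a = p c then (1:ℝ) else 0) else 1) = 1 := by
      intro t ht
      have : ∀ a : Fin C × Fin C,
          (∏ c, if f c = t then (if a = p c then (1:ℝ) else 0) else 1) = 1 := by
        intro a
        refine Finset.prod_eq_one fun c _ => ?_
        have : f c ≠ t := by
          intro h; exact ht (Finset.mem_image.2 ⟨c, Finset.mem_univ c, h⟩)
        simp [this]
      simp only [this, mul_one, hw]
    rw [← Finset.prod_subset (Finset.subset_univ (Finset.image f Finset.univ))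
      (fun t _ ht => houtside t ht), Finset.prod_image (fun a _ b _ h => hf h)]
    refine Finset.prod_congr rfl fun c _ => ?_
    have hin : ∀ a : Fin C × Fin C,
        (∏ c', if f c' = f c then (if a = p c' then (1:ℝ) else 0) else 1)
        = if a = p c then (1:ℝ) else 0 := by
      intro a
      rw [Finset.prod_eq_single c
        (fun c' _ hc' => by
          have : f c' ≠ f c := fun h => hc' (hf h)
          simp [this])
        (fun h => absurd (Finset.mem_univ c) h)]
      simp
    simp only [hin, mul_ite, mul_one, mul_zero]
    simp
  · simp only [hf, if_false]
    refine Finset.sum_eq_zero fun x _ => ?_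
    obtain ⟨c, c', hfe, hne⟩ := Function.not_injective_iff.1 hf
    have : (∏ c, (if x (f c) = p c then (1:ℝ) else 0)) = 0 := by
      by_cases hx : x (f c) = p c
      · refine Finset.prod_eq_zero (Finset.mem_univ c') ?_
        have : x (f c') = p c := by rw [← hfe]; exact hx
        have hne' : p c ≠ p c' := fun h => hne (hp h)
        simp [this, hne']
      · exact Finset.prod_eq_zero (Finset.mem_univ c) (by simp [hx])
    rw [this, mul_zero]

private lemma key_sum {C T : ℕ} (w : Fin C × Fin C → ℝ) (hw : ∑ a, w a = 1) :
    (∑ x : Fin T → Fin C × Fin C, (∏ t, w (x t)) *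
        (Matrix.of fun c c' : Fin C =>
          ∑ t : Fin T, if x t = (c, c') then (1 : ℝ) else 0).det)
    = (T.descFactorial C : ℝ) *
        (Matrix.of fun c c' : Fin C => w (c, c')).det := by
  classical
  simp only [Matrix.det_apply', Matrix.of_apply, Finset.mul_sum]
  rw [Finset.sum_comm]
  refine Finset.sum_congr rfl fun σ _ => ?_
  have : ∀ x : Fin T → Fin C × Fin C,
      (∏ t, w (x t)) * ((Equiv.Perm.sign σ : ℤ) : ℝ) *
        ∏ c, ∑ t : Fin T, (if x t = (σ c, c) then (1:ℝ) else 0)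
      = ((Equiv.Perm.sign σ : ℤ) : ℝ) * ∑ f ∈ Fintype.piFinset (fun _ : Fin C => (Finset.univ : Finset (Fin T))),
          (∏ t, w (x t)) * ∏ c, (if x (f c) = (σ c, c) then (1:ℝ) else 0) := by
    intro x
    rw [Finset.prod_univ_sum, ← Finset.mul_sum]
    ring
  simp only [mul_comm, mul_left_comm]
  calc (∑ x : Fin T → Fin C × Fin C, ((Equiv.Perm.sign σ : ℤ) : ℝ) *
          ((∏ t, w (x t)) * ∏ c, ∑ t : Fin T, (if x t = (σ c, c) then (1:ℝ) else 0)))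
      = ∑ x : Fin T → Fin C × Fin C, ((Equiv.Perm.sign σ : ℤ) : ℝ) *
          ∑ f ∈ Fintype.piFinset (fun _ : Fin C => (Finset.univ : Finset (Fin T))),
          (∏ t, w (x t)) * ∏ c, (if x (f c) = (σ c, c) then (1:ℝ) else 0) := by
        refine Finset.sum_congr rfl fun x _ => ?_
        rw [Finset.prod_univ_sum, Finset.mul_sum]
    _ = ((Equiv.Perm.sign σ : ℤ) : ℝ) *
          ∑ f ∈ Fintype.piFinset (fun _ : Fin C => (Finset.univ : Finset (Fin T))),
          ∑ x : Fin T → Fin C × Fin C,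
          (∏ t, w (x t)) * ∏ c, (if x (f c) = (σ c, c) then (1:ℝ) else 0) := by
        rw [← Finset.mul_sum, Finset.sum_comm]
    _ = (T.descFactorial C : ℝ) *
          (((Equiv.Perm.sign σ : ℤ) : ℝ) * ∏ c, w (σ c, c)) := by
        have hp : Function.Injective (fun c : Fin C => ((σ c, c) : Fin C × Fin C)) :=
          fun a b h => by simpa using congrArg Prod.snd h
        have := fun f : Fin C → Fin T => sum_x_aux w hw (fun c => (σ c, c)) hp f
        simp only [Fintype.piFinset_univ]
        rw [Finset.sum_congr rfl (fun f _ => this f)]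
        rw [Finset.sum_ite, Finset.sum_const, Finset.sum_const_zero, add_zero,
          nsmul_eq_mul]
        have hcard : (Finset.univ.filter (fun f : Fin C → Fin T => Function.Injective f)).card
            = T.descFactorial C := by
          rw [← Fintype.card_subtype,
            Fintype.card_congr (Equiv.subtypeInjectiveEquivEmbedding (Fin C) (Fin T)),
            Fintype.card_embedding_eq, Fintype.card_fin, Fintype.card_fin]
        rw [hcard]
        ring
  ring

/-- unbiased estimator of the joint-distribution determinant: for
`T ≥ C` i.i.d. samples from a distribution `ν` on `Fin C × Fin C`, the count matrix
`M(c,c') = Σ_t 1[sample t = (c,c')]` satisfies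
`E[det M] = binom(T,C) · C! · det U`, where `U(c,c') = ν {(c,c')}`. -/
theorem expected_det_count_matrix (C T : ℕ) (hT : C ≤ T)
    (ν : Measure (Fin C × Fin C)) [IsProbabilityMeasure ν] :
    (∫ ω : Fin T → Fin C × Fin C,
        (Matrix.of fun c c' : Fin C =>
          ∑ t : Fin T, if ω t = (c, c') then (1 : ℝ) else 0).det
        ∂(Measure.pi fun _ : Fin T => ν))
      = ((T.choose C * Nat.factorial C : ℕ) : ℝ) *
        (Matrix.of fun c c' : Fin C => (ν {(c, c')}).toReal).det := by
  classical
  have hmeas : ∀ x : Fin T → Fin C × Fin C,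
      (Measure.pi fun _ : Fin T => ν) {x} = ∏ t, ν {x t} := by
    intro x
    rw [← Set.univ_pi_singleton x, Measure.pi_pi]
  rw [integral_fintype (Integrable.of_finite)]
  simp only [Measure.real, hmeas, ENNReal.toReal_prod, smul_eq_mul]
  have hw : ∑ a : Fin C × Fin C, (ν {a}).toReal = 1 := by
    rw [← ENNReal.toReal_sum (fun a _ => measure_ne_top ν _)]
    have : ∑ a : Fin C × Fin C, ν {a} = ν Set.univ := by
      rw [show (Set.univ : Set (Fin C × Fin C)) = ⋃ a ∈ (Finset.univ : Finset (Fin C × Fin C)), {a} by ext a; simp,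
        measure_biUnion_finset]
      · intro a _ b _ hab
        simp [Set.disjoint_singleton, hab]
      · exact fun a _ => measurableSet_singleton a
    rw [this]
    simp
  have := key_sum (T := T) (fun a => (ν {a}).toReal) hw
  rw [this]
  congr 1
  rw [Nat.descFactorial_eq_factorial_mul_choose]
  push_cast
  ring
end

section
/- In DMI-Mechanism with T ≥ 2C tasks split into two disjoint parts T_1, T_2 each of size at least C, agent i's expected payment equals Σ_{j≠i} a_1 a_2 · DMI(X̂_i; X̂_j)^2, where a_ℓ = binom(|T_ℓ|, C)·C! and X̂_i, X̂_j are the reported signals. In particular the expected payment is nonnegative. -/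
open MeasureTheory Finset

/-- The count matrix of agents `i` and `j` over the tasks in `Tl`: entry `(c,c')` counts
the tasks `t ∈ Tl` on which agent `i` reports `c` and agent `j` reports `c'`. -/
def countMatrix {C T n : ℕ} (Tl : Finset (Fin T)) (i j : Fin n)
    (ω : Fin T → (Fin n → Fin C)) : Matrix (Fin C) (Fin C) ℝ :=
  Matrix.of fun c c' => ∑ t ∈ Tl, if ω t i = c ∧ ω t j = c' then (1 : ℝ) else 0

/-- Agent `i`'s DMI-Mechanism payment: `p_i = Σ_{j≠i} det(M₁^{ij})·det(M₂^{ij})`. -/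
def payment {C T n : ℕ} (T1 T2 : Finset (Fin T)) (i : Fin n)
    (ω : Fin T → (Fin n → Fin C)) : ℝ :=
  ∑ j ∈ Finset.univ.erase i,
    (countMatrix T1 i j ω).det * (countMatrix T2 i j ω).det

/-- The joint distribution matrix of the reports of agents `i` and `j` under the
per-task report distribution `ν`. -/
noncomputable def reportJointMatrix {C n : ℕ} (ν : Measure (Fin n → Fin C))
    (i j : Fin n) : Matrix (Fin C) (Fin C) ℝ :=
  Matrix.of fun c c' => (ν {f | f i = c ∧ f j = c'}).toReal

section DMIHelpers

variable {C T n : ℕ}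

/-- The single-selection matrix for a selection `f` of tasks. -/
def Bmat (f : Fin C → Fin T) (i j : Fin n) (ω : Fin T → (Fin n → Fin C)) :
    Matrix (Fin C) (Fin C) ℝ :=
  Matrix.of fun c c' => if ω (f c) i = c ∧ ω (f c) j = c' then (1 : ℝ) else 0

lemma det_countMatrix (Tl : Finset (Fin T)) (i j : Fin n) (ω : Fin T → (Fin n → Fin C)) :
    (countMatrix Tl i j ω).det
      = ∑ f ∈ Fintype.piFinset (fun _ : Fin C => Tl), (Bmat f i j ω).det := by
  have h : countMatrix Tl i j ω
      = fun c => ∑ t ∈ Tl, (fun c' => if ω t i = c ∧ ω t j = c' then (1:ℝ) else 0) := by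
    funext c c'
    simp [countMatrix, Finset.sum_apply]
  show Matrix.detRowAlternating (countMatrix Tl i j ω) = _
  rw [h]
  exact Matrix.detRowAlternating.toMultilinearMap.map_sum_finset
    (fun c t => fun c' => if ω t i = c ∧ ω t j = c' then (1:ℝ) else 0) (fun _ => Tl)

lemma det_Bmat_zero (f : Fin C → Fin T) (i j : Fin n) (ω : Fin T → (Fin n → Fin C))
    (hf : ¬ Function.Injective f) : (Bmat f i j ω).det = 0 := by
  simp only [Function.Injective, not_forall] at hf
  obtain ⟨c, c', hcc, hne⟩ := hf
  by_cases h : ω (f c) i = c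
  · apply Matrix.det_eq_zero_of_row_eq_zero c'
    intro c''
    simp only [Bmat, Matrix.of_apply, ite_eq_right_iff]
    rintro ⟨h1, -⟩
    exact (hne ((h.symm.trans (congrArg (fun t => ω t i) hcc)).trans h1)).elim
  · apply Matrix.det_eq_zero_of_row_eq_zero c
    intro c''
    simp only [Bmat, Matrix.of_apply, ite_eq_right_iff]
    rintro ⟨h1, -⟩
    exact (h h1).elim

lemma card_inj_funs (Tl : Finset (Fin T)) :
    ((Fintype.piFinset fun _ : Fin C => Tl).filter fun f => Function.Injective f).card
      = Tl.card.choose C * Nat.factorial C := by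
  have h : ((Fintype.piFinset fun _ : Fin C => Tl).filter fun f => Function.Injective f).card
      = Fintype.card (Fin C ↪ {x // x ∈ Tl}) := by
    rw [← Finset.card_univ]
    apply Finset.card_bij (fun f hf =>
      (⟨fun c => ⟨f c, by
        have := Finset.mem_filter.mp hf
        exact (Fintype.mem_piFinset.mp this.1) c⟩, by
        intro a b hab
        exact (Finset.mem_filter.mp hf).2 (congrArg Subtype.val hab)⟩ :
          Fin C ↪ {x // x ∈ Tl}))
    · intro a ha; exact Finset.mem_univ _
    · intro a ha b hb hab
      funext c
      exact congrArg Subtype.val (DFunLike.congr_fun hab c)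
    · intro b _
      refine ⟨fun c => (b c : Fin T), ?_, ?_⟩
      · rw [Finset.mem_filter, Fintype.mem_piFinset]
        exact ⟨fun c => (b c).2, fun a a' haa => b.injective (Subtype.ext haa)⟩
      · ext c : 2
        simp
  rw [h, Fintype.card_embedding_eq, Fintype.card_coe, Fintype.card_fin,
    Nat.descFactorial_eq_factorial_mul_choose, mul_comm]

lemma prod_aux (f : Fin C → Fin T) (hinj : Function.Injective f) (g : Fin C → ℝ)
    (G : Fin T → ℝ) (h1 : ∀ d, G (f d) = g d) (h2 : ∀ t, (¬ ∃ d, f d = t) → G t = 1) :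
    ∏ t : Fin T, G t = ∏ d : Fin C, g d := by
  rw [← Finset.prod_sdiff (Finset.subset_univ (Finset.image f Finset.univ))]
  rw [Finset.prod_eq_one (fun t ht => by
    refine h2 t fun ⟨d, hd⟩ => ?_
    rw [Finset.mem_sdiff] at ht
    exact ht.2 (Finset.mem_image.mpr ⟨d, Finset.mem_univ d, hd⟩)), one_mul]
  rw [Finset.prod_image (fun a _ b _ hab => hinj hab)]
  exact Finset.prod_congr rfl fun d _ => h1 d

/-- Per-coordinate weight function used to factor the integrand over tasks. -/
noncomputable def wfun (f : Fin C → Fin T) (σ : Equiv.Perm (Fin C)) (i j : Fin n)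
    (t : Fin T) (x : Fin n → Fin C) : ℝ :=
  if h : ∃ d, f d = t then
    (if x i = Classical.choose h ∧ x j = σ⁻¹ (Classical.choose h) then 1 else 0)
  else 1

lemma wfun_apply_mem (f : Fin C → Fin T) (hinj : Function.Injective f)
    (σ : Equiv.Perm (Fin C)) (i j : Fin n) (d : Fin C) (x : Fin n → Fin C) :
    wfun f σ i j (f d) x = if x i = d ∧ x j = σ⁻¹ d then 1 else 0 := by
  have h : ∃ d', f d' = f d := ⟨d, rfl⟩
  have hc : Classical.choose h = d := hinj (Classical.choose_spec h)
  rw [wfun, dif_pos h, hc]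

lemma wfun_apply_not_mem (f : Fin C → Fin T) (σ : Equiv.Perm (Fin C)) (i j : Fin n)
    (t : Fin T) (ht : ¬ ∃ d, f d = t) (x : Fin n → Fin C) : wfun f σ i j t x = 1 := by
  rw [wfun, dif_neg ht]

lemma prod_B_eq_prod_wfun (f : Fin C → Fin T) (hinj : Function.Injective f)
    (σ : Equiv.Perm (Fin C)) (i j : Fin n) (ω : Fin T → (Fin n → Fin C)) :
    ∏ c : Fin C, (Bmat f i j ω) (σ c) c = ∏ t : Fin T, wfun f σ i j t (ω t) := by
  calc ∏ c : Fin C, (Bmat f i j ω) (σ c) c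
      = ∏ c : Fin C, (fun d => if ω (f d) i = d ∧ ω (f d) j = σ⁻¹ d then (1:ℝ) else 0) (σ c) := by
        refine Finset.prod_congr rfl fun c _ => ?_
        simp only [Bmat, Matrix.of_apply, Equiv.Perm.inv_def, Equiv.symm_apply_apply]
    _ = ∏ d : Fin C, (if ω (f d) i = d ∧ ω (f d) j = σ⁻¹ d then (1:ℝ) else 0) :=
        Equiv.prod_comp σ (fun d => if ω (f d) i = d ∧ ω (f d) j = σ⁻¹ d then (1:ℝ) else 0)
    _ = ∏ t : Fin T, wfun f σ i j t (ω t) :=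
        (prod_aux f hinj _ _ (fun d => wfun_apply_mem f hinj σ i j d (ω _))
          (fun t ht => wfun_apply_not_mem f σ i j t ht (ω _))).symm

lemma integral_wfun (ν : Measure (Fin n → Fin C)) [IsProbabilityMeasure ν]
    (f : Fin C → Fin T) (hinj : Function.Injective f) (σ : Equiv.Perm (Fin C))
    (i j : Fin n) (d : Fin C) :
    ∫ x, wfun f σ i j (f d) x ∂ν = reportJointMatrix ν i j d (σ⁻¹ d) := by
  simp only [wfun_apply_mem f hinj σ i j d]
  rw [show (fun x : Fin n → Fin C => if x i = d ∧ x j = σ⁻¹ d then (1:ℝ) else 0)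
      = Set.indicator {x : Fin n → Fin C | x i = d ∧ x j = σ⁻¹ d} (1 : (Fin n → Fin C) → ℝ) by
    funext x
    simp [Set.indicator_apply, Set.mem_setOf_eq]]
  rw [MeasureTheory.integral_indicator_one (Set.toFinite _).measurableSet]
  rfl

lemma integral_wfun_not_mem (ν : Measure (Fin n → Fin C)) [IsProbabilityMeasure ν]
    (f : Fin C → Fin T) (σ : Equiv.Perm (Fin C)) (i j : Fin n) (t : Fin T)
    (ht : ¬ ∃ d, f d = t) : ∫ x, wfun f σ i j t x ∂ν = 1 := by
  simp only [wfun_apply_not_mem f σ i j t ht]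
  simp

lemma det_rebuild (U : Matrix (Fin C) (Fin C) ℝ) :
    ∑ σ : Equiv.Perm (Fin C), ((Equiv.Perm.sign σ : ℤ) : ℝ) * ∏ d : Fin C, U d (σ⁻¹ d)
      = U.det := by
  have h : ∀ σ : Equiv.Perm (Fin C),
      ((Equiv.Perm.sign σ : ℤ) : ℝ) * ∏ d : Fin C, U d (σ⁻¹ d)
      = (fun τ : Equiv.Perm (Fin C) =>
          ((Equiv.Perm.sign τ : ℤ) : ℝ) * ∏ d : Fin C, U d (τ d)) σ⁻¹ := by
    intro σ
    simp [Equiv.Perm.sign_inv]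
  rw [Finset.sum_congr rfl fun σ _ => h σ]
  rw [Fintype.sum_equiv (Equiv.inv (Equiv.Perm (Fin C)))
    (fun σ => (fun τ : Equiv.Perm (Fin C) =>
      ((Equiv.Perm.sign τ : ℤ) : ℝ) * ∏ d : Fin C, U d (τ d)) σ⁻¹)
    (fun τ => ((Equiv.Perm.sign τ : ℤ) : ℝ) * ∏ d : Fin C, U d (τ d)) (fun σ => rfl)]
  rw [← Matrix.det_transpose U, Matrix.det_apply']
  rfl

lemma integral_det_mul (ν : Measure (Fin n → Fin C)) [IsProbabilityMeasure ν]
    (i j : Fin n) (T1 T2 : Finset (Fin T)) (hdisj : Disjoint T1 T2)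
    (f₁ f₂ : Fin C → Fin T) (hf₁ : ∀ c, f₁ c ∈ T1) (hf₂ : ∀ c, f₂ c ∈ T2)
    (hinj₁ : Function.Injective f₁) (hinj₂ : Function.Injective f₂) :
    ∫ ω, (Bmat f₁ i j ω).det * (Bmat f₂ i j ω).det ∂(Measure.pi fun _ : Fin T => ν)
      = (reportJointMatrix ν i j).det * (reportJointMatrix ν i j).det := by
  letI : MeasureSpace (Fin n → Fin C) := ⟨ν⟩
  have hvol : (Measure.pi fun _ : Fin T => ν) = (volume : Measure (Fin T → Fin n → Fin C)) := by
    rw [MeasureTheory.volume_pi]; rfl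
  have hsep : ∀ t : Fin T, ¬ ((∃ d, f₁ d = t) ∧ (∃ d, f₂ d = t)) := by
    rintro t ⟨⟨d₁, h₁⟩, ⟨d₂, h₂⟩⟩
    exact (Finset.disjoint_left.mp hdisj (h₁ ▸ hf₁ d₁)) (h₂ ▸ hf₂ d₂)
  simp only [Matrix.det_apply' (Bmat f₁ i j _), Matrix.det_apply' (Bmat f₂ i j _)]
  rw [hvol]
  have hterm : ∀ ω : Fin T → Fin n → Fin C,
      (∑ σ : Equiv.Perm (Fin C), ((Equiv.Perm.sign σ : ℤ) : ℝ) * ∏ c, Bmat f₁ i j ω (σ c) c) *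
      (∑ σ : Equiv.Perm (Fin C), ((Equiv.Perm.sign σ : ℤ) : ℝ) * ∏ c, Bmat f₂ i j ω (σ c) c)
      = ∑ σ₁ : Equiv.Perm (Fin C), ∑ σ₂ : Equiv.Perm (Fin C),
          (((Equiv.Perm.sign σ₁ : ℤ) : ℝ) * ((Equiv.Perm.sign σ₂ : ℤ) : ℝ)) *
          ∏ t : Fin T, (wfun f₁ σ₁ i j t (ω t) * wfun f₂ σ₂ i j t (ω t)) := by
    intro ω
    rw [Finset.sum_mul_sum]
    refine Finset.sum_congr rfl fun σ₁ _ => Finset.sum_congr rfl fun σ₂ _ => ?_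
    rw [prod_B_eq_prod_wfun f₁ hinj₁ σ₁ i j ω, prod_B_eq_prod_wfun f₂ hinj₂ σ₂ i j ω,
      Finset.prod_mul_distrib]
    ring
  rw [MeasureTheory.integral_congr_ae (Filter.Eventually.of_forall hterm)]
  rw [MeasureTheory.integral_finset_sum _ (fun σ₁ _ => .of_finite)]
  have hfub : ∀ σ₁ σ₂ : Equiv.Perm (Fin C),
      (∫ ω : Fin T → Fin n → Fin C,
        (((Equiv.Perm.sign σ₁ : ℤ) : ℝ) * ((Equiv.Perm.sign σ₂ : ℤ) : ℝ)) *
        ∏ t : Fin T, (wfun f₁ σ₁ i j t (ω t) * wfun f₂ σ₂ i j t (ω t)))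
      = (((Equiv.Perm.sign σ₁ : ℤ) : ℝ) * ∏ d, reportJointMatrix ν i j d (σ₁⁻¹ d)) *
        (((Equiv.Perm.sign σ₂ : ℤ) : ℝ) * ∏ d, reportJointMatrix ν i j d (σ₂⁻¹ d)) := by
    intro σ₁ σ₂
    rw [MeasureTheory.integral_const_mul]
    rw [MeasureTheory.integral_fintype_prod_volume_eq_prod
      (fun t x => wfun f₁ σ₁ i j t x * wfun f₂ σ₂ i j t x)]
    have hone : ∀ t : Fin T,
        (∫ x, wfun f₁ σ₁ i j t x * wfun f₂ σ₂ i j t x)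
          = (∫ x, wfun f₁ σ₁ i j t x ∂ν) * (∫ x, wfun f₂ σ₂ i j t x ∂ν) := by
      intro t
      by_cases h₁ : ∃ d, f₁ d = t
      · have h₂ : ¬ ∃ d, f₂ d = t := fun h => hsep t ⟨h₁, h⟩
        rw [integral_wfun_not_mem ν f₂ σ₂ i j t h₂, mul_one]
        rw [show (fun x => wfun f₁ σ₁ i j t x * wfun f₂ σ₂ i j t x)
            = fun x => wfun f₁ σ₁ i j t x by
          funext x; rw [wfun_apply_not_mem f₂ σ₂ i j t h₂ x, mul_one]]
        rfl
      · rw [integral_wfun_not_mem ν f₁ σ₁ i j t h₁, one_mul]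
        rw [show (fun x => wfun f₁ σ₁ i j t x * wfun f₂ σ₂ i j t x)
            = fun x => wfun f₂ σ₂ i j t x by
          funext x; rw [wfun_apply_not_mem f₁ σ₁ i j t h₁ x, one_mul]]
        rfl
    rw [Finset.prod_congr rfl fun t _ => hone t, Finset.prod_mul_distrib]
    rw [prod_aux f₁ hinj₁ _ _ (fun d => integral_wfun ν f₁ hinj₁ σ₁ i j d)
      (fun t ht => integral_wfun_not_mem ν f₁ σ₁ i j t ht)]
    rw [prod_aux f₂ hinj₂ _ _ (fun d => integral_wfun ν f₂ hinj₂ σ₂ i j d)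
      (fun t ht => integral_wfun_not_mem ν f₂ σ₂ i j t ht)]
    ring
  calc ∑ σ₁ : Equiv.Perm (Fin C), ∫ ω : Fin T → Fin n → Fin C,
        ∑ σ₂ : Equiv.Perm (Fin C),
          (((Equiv.Perm.sign σ₁ : ℤ) : ℝ) * ((Equiv.Perm.sign σ₂ : ℤ) : ℝ)) *
          ∏ t : Fin T, (wfun f₁ σ₁ i j t (ω t) * wfun f₂ σ₂ i j t (ω t))
      = ∑ σ₁ : Equiv.Perm (Fin C), ∑ σ₂ : Equiv.Perm (Fin C),
          (((Equiv.Perm.sign σ₁ : ℤ) : ℝ) * ∏ d, reportJointMatrix ν i j d (σ₁⁻¹ d)) *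
          (((Equiv.Perm.sign σ₂ : ℤ) : ℝ) * ∏ d, reportJointMatrix ν i j d (σ₂⁻¹ d)) := by
        refine Finset.sum_congr rfl fun σ₁ _ => ?_
        rw [MeasureTheory.integral_finset_sum _ (fun σ₂ _ => .of_finite)]
        exact Finset.sum_congr rfl fun σ₂ _ => hfub σ₁ σ₂
    _ = (reportJointMatrix ν i j).det * (reportJointMatrix ν i j).det := by
        rw [← Finset.sum_mul_sum, det_rebuild]

end DMIHelpers

/-- in the DMI-Mechanism with `T ≥ 2C` tasks split into two disjoint parts
`T₁, T₂`, each of size at least `C`, and tasks i.i.d. with per-task report distribution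
`ν`, agent `i`'s expected payment equals
`Σ_{j≠i} a₁ a₂ · DMI(X̂_i; X̂_j)²` with `a_ℓ = binom(|T_ℓ|,C)·C!`; in particular it is
nonnegative. -/
theorem expected_payment_DMI (C T n : ℕ) (hT : 2 * C ≤ T) (i : Fin n)
    (ν : Measure (Fin n → Fin C)) [IsProbabilityMeasure ν]
    (T1 T2 : Finset (Fin T)) (hdisj : Disjoint T1 T2)
    (h1 : C ≤ T1.card) (h2 : C ≤ T2.card) :
    (∫ ω, payment T1 T2 i ω ∂(Measure.pi fun _ : Fin T => ν))
      = ∑ j ∈ Finset.univ.erase i,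
          ((T1.card.choose C * Nat.factorial C : ℕ) : ℝ) *
          ((T2.card.choose C * Nat.factorial C : ℕ) : ℝ) *
          |(reportJointMatrix ν i j).det| ^ 2 ∧
    0 ≤ ∫ ω, payment T1 T2 i ω ∂(Measure.pi fun _ : Fin T => ν) := by
  classical
  have main : (∫ ω, payment T1 T2 i ω ∂(Measure.pi fun _ : Fin T => ν))
      = ∑ j ∈ Finset.univ.erase i,
          ((T1.card.choose C * Nat.factorial C : ℕ) : ℝ) *
          ((T2.card.choose C * Nat.factorial C : ℕ) : ℝ) *
          |(reportJointMatrix ν i j).det| ^ 2 := by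
    unfold payment
    rw [MeasureTheory.integral_finset_sum _ (fun j _ => .of_finite)]
    refine Finset.sum_congr rfl fun j hj => ?_
    set S₁ := (Fintype.piFinset fun _ : Fin C => T1).filter
      (fun f => Function.Injective f) with hS₁
    set S₂ := (Fintype.piFinset fun _ : Fin C => T2).filter
      (fun f => Function.Injective f) with hS₂
    have e1 : ∀ (Tl : Finset (Fin T)) (ω : Fin T → Fin n → Fin C),
        (countMatrix Tl i j ω).det
        = ∑ f ∈ (Fintype.piFinset fun _ : Fin C => Tl).filter
            (fun f => Function.Injective f), (Bmat f i j ω).det := by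
      intro Tl ω
      rw [det_countMatrix]
      exact (Finset.sum_filter_of_ne (fun f _ hne => by
        by_contra hni
        exact hne (det_Bmat_zero f i j ω hni))).symm
    calc ∫ ω, (countMatrix T1 i j ω).det * (countMatrix T2 i j ω).det
            ∂(Measure.pi fun _ : Fin T => ν)
        = ∫ ω, ∑ f₁ ∈ S₁, ∑ f₂ ∈ S₂, (Bmat f₁ i j ω).det * (Bmat f₂ i j ω).det
            ∂(Measure.pi fun _ : Fin T => ν) := by
          refine MeasureTheory.integral_congr_ae (Filter.Eventually.of_forall fun ω => ?_)
          show (countMatrix T1 i j ω).det * (countMatrix T2 i j ω).det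
            = ∑ f₁ ∈ S₁, ∑ f₂ ∈ S₂, (Bmat f₁ i j ω).det * (Bmat f₂ i j ω).det
          rw [e1 T1 ω, e1 T2 ω, Finset.sum_mul_sum]
      _ = ∑ f₁ ∈ S₁, ∑ f₂ ∈ S₂,
            ∫ ω, (Bmat f₁ i j ω).det * (Bmat f₂ i j ω).det
              ∂(Measure.pi fun _ : Fin T => ν) := by
          rw [MeasureTheory.integral_finset_sum _ (fun f₁ _ => .of_finite)]
          exact Finset.sum_congr rfl fun f₁ _ =>
            MeasureTheory.integral_finset_sum _ (fun f₂ _ => .of_finite)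
      _ = ∑ f₁ ∈ S₁, ∑ f₂ ∈ S₂,
            (reportJointMatrix ν i j).det * (reportJointMatrix ν i j).det := by
          refine Finset.sum_congr rfl fun f₁ hf₁ => Finset.sum_congr rfl fun f₂ hf₂ => ?_
          rw [hS₁, Finset.mem_filter, Fintype.mem_piFinset] at hf₁
          rw [hS₂, Finset.mem_filter, Fintype.mem_piFinset] at hf₂
          exact integral_det_mul ν i j T1 T2 hdisj f₁ f₂ hf₁.1 hf₂.1 hf₁.2 hf₂.2
      _ = (S₁.card : ℝ) * ((S₂.card : ℝ) *
            ((reportJointMatrix ν i j).det * (reportJointMatrix ν i j).det)) := by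
          rw [Finset.sum_const, Finset.sum_const, nsmul_eq_mul, nsmul_eq_mul]
      _ = ((T1.card.choose C * Nat.factorial C : ℕ) : ℝ) *
          ((T2.card.choose C * Nat.factorial C : ℕ) : ℝ) *
          |(reportJointMatrix ν i j).det| ^ 2 := by
          rw [hS₁, hS₂, card_inj_funs, card_inj_funs, sq_abs, pow_two]
          ring
  refine ⟨main, main ▸ Finset.sum_nonneg fun j _ => by positivity⟩
end

section
/- Dominant truthfulness inequality: if each agent's report X̂_i is conditionally independent of other agents' reports given her private signal X_i, then for every agent i, Σ_{j≠i} DMI(X̂_i; X̂_j)^2 ≤ Σ_{j≠i} DMI(X_i; X̂_j)^2, i.e., reporting X_i (truth-telling) weakly maximizes her expected DMI-Mechanism payment regardless of others' strategies. -/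
open MeasureTheory

/-- A nonnegative matrix with column sums at most one has `|det| ≤ 1`. -/
lemma abs_det_le_one_of_substochastic {C : ℕ} (T : Matrix (Fin C) (Fin C) ℝ)
    (h0 : ∀ x' x, 0 ≤ T x' x) (h1 : ∀ x, ∑ x', T x' x ≤ 1) : |T.det| ≤ 1 := by
  have hstep1 : |T.det| ≤ ∑ σ : Equiv.Perm (Fin C), ∏ x, T (σ x) x := by
    rw [Matrix.det_apply]
    refine le_trans (Finset.abs_sum_le_sum_abs _ _) ?_
    apply Finset.sum_le_sum
    intro σ _
    rcases Int.units_eq_one_or (Equiv.Perm.sign σ) with h | h <;>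
      simp [h, abs_of_nonneg (Finset.prod_nonneg fun x _ => h0 (σ x) x)]
  have hstep2 : ∑ σ : Equiv.Perm (Fin C), ∏ x, T (σ x) x
      ≤ ∑ g : Fin C → Fin C, ∏ x, T (g x) x := by
    have himg : ∑ σ : Equiv.Perm (Fin C), ∏ x, T (σ x) x
        = ∑ g ∈ Finset.univ.image (fun σ : Equiv.Perm (Fin C) => ⇑σ),
            ∏ x, T (g x) x := by
      rw [Finset.sum_image]
      intro a _ b _ hab
      exact Equiv.coe_fn_injective hab
    rw [himg]
    apply Finset.sum_le_sum_of_subset_of_nonneg (Finset.subset_univ _)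
    intro g _ _
    exact Finset.prod_nonneg fun x _ => h0 (g x) x
  have hstep3 : ∑ g : Fin C → Fin C, ∏ x, T (g x) x
      = ∏ x, ∑ x', T x' x := by
    rw [Finset.prod_univ_sum]
    rw [← Fintype.piFinset_univ]
  have hstep4 : ∏ x, ∑ x', T x' x ≤ 1 :=
    Finset.prod_le_one (fun x _ => Finset.sum_nonneg fun x' _ => h0 x' x)
      (fun x _ => h1 x)
  linarith

/-- dominant truthfulness inequality: if agent `i`'s report `X̂ᵢ` is
conditionally independent of every other agent's report given her private signal `Xᵢ`,
then `Σ_{j≠i} DMI(X̂ᵢ; X̂ⱼ)² ≤ Σ_{j≠i} DMI(Xᵢ; X̂ⱼ)²`: truth-telling weakly maximizes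
her expected DMI-Mechanism payment regardless of others' strategies. -/
theorem dominant_truthfulness_ineq {Ω : Type*} [MeasurableSpace Ω] (μ : Measure Ω)
    [IsProbabilityMeasure μ] {C n : ℕ} (i : Fin n)
    (X Xhat : Fin n → Ω → Fin C)
    (hX : ∀ k, Measurable (X k)) (hXhat : ∀ k, Measurable (Xhat k))
    (hci : ∀ j, j ≠ i → ∀ x x' y,
      μ {ω | X i ω = x} * μ {ω | Xhat i ω = x' ∧ Xhat j ω = y ∧ X i ω = x} =
        μ {ω | Xhat i ω = x' ∧ X i ω = x} * μ {ω | Xhat j ω = y ∧ X i ω = x}) :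
    ∑ j ∈ Finset.univ.erase i, DMI μ (Xhat i) (Xhat j) ^ 2
      ≤ ∑ j ∈ Finset.univ.erase i, DMI μ (X i) (Xhat j) ^ 2 := by
  apply Finset.sum_le_sum
  intro j hj
  have hji : j ≠ i := Finset.ne_of_mem_erase hj
  -- the "strategy" matrix
  set p : Fin C → ℝ := fun x => (μ {ω | X i ω = x}).toReal with hp
  set T : Matrix (Fin C) (Fin C) ℝ := Matrix.of fun x' x =>
    if p x = 0 then 0 else (μ {ω | Xhat i ω = x' ∧ X i ω = x}).toReal / p x with hT
  have hT0 : ∀ x' x, 0 ≤ T x' x := by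
    intro x' x
    simp only [hT, Matrix.of_apply]
    split
    · exact le_refl 0
    · positivity
  have hmeas : ∀ (x' y x : Fin C),
      MeasurableSet {ω | Xhat i ω = x' ∧ Xhat j ω = y ∧ X i ω = x} := by
    intro x' y x
    exact ((hXhat i) (measurableSet_singleton x')).inter
      (((hXhat j) (measurableSet_singleton y)).inter ((hX i) (measurableSet_singleton x)))
  -- column sums of T at most 1
  have hT1 : ∀ x, ∑ x', T x' x ≤ 1 := by
    intro x
    by_cases hx : p x = 0
    · simp [hT, hx]
    · have hsum : ∑ x', (μ {ω | Xhat i ω = x' ∧ X i ω = x}).toReal = p x := by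
        rw [hp]
        rw [← ENNReal.toReal_sum (fun a _ => measure_ne_top μ _)]
        congr 1
        have : {ω | X i ω = x} = ⋃ x' ∈ (Finset.univ : Finset (Fin C)),
            {ω | Xhat i ω = x' ∧ X i ω = x} := by
          ext ω
          simp
        rw [this, measure_biUnion_finset]
        · intro a _ b _ hab
          apply Set.disjoint_left.mpr
          rintro ω ⟨h1, _⟩ ⟨h2, _⟩
          exact hab (h1 ▸ h2 ▸ rfl)
        · intro x' _
          exact ((hXhat i) (measurableSet_singleton x')).inter
            ((hX i) (measurableSet_singleton x))
      have : ∑ x', T x' x = 1 := by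
        simp only [hT, Matrix.of_apply, if_neg hx]
        rw [← Finset.sum_div, hsum, div_self hx]
      rw [this]
  -- factorization
  have hfac : jointMatrix μ (Xhat i) (Xhat j) = T * jointMatrix μ (X i) (Xhat j) := by
    ext x' y
    rw [Matrix.mul_apply]
    have hterm : ∀ x, T x' x * jointMatrix μ (X i) (Xhat j) x y
        = (μ {ω | Xhat i ω = x' ∧ Xhat j ω = y ∧ X i ω = x}).toReal := by
      intro x
      by_cases hx : p x = 0
      · have hμ0 : μ {ω | X i ω = x} = 0 := by
          have := measure_ne_top μ {ω | X i ω = x}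
          simpa [hp, ENNReal.toReal_eq_zero_iff, this] using hx
        have h0' : μ {ω | Xhat i ω = x' ∧ Xhat j ω = y ∧ X i ω = x} = 0 := by
          refine le_antisymm ?_ zero_le
          rw [← hμ0]
          exact measure_mono fun ω h => h.2.2
        simp [hT, hx, h0']
      · have hμt : μ {ω | X i ω = x} ≠ ⊤ := measure_ne_top μ _
        have key := hci j hji x x' y
        have key' : p x * (μ {ω | Xhat i ω = x' ∧ Xhat j ω = y ∧ X i ω = x}).toReal
            = (μ {ω | Xhat i ω = x' ∧ X i ω = x}).toReal
              * (μ {ω | Xhat j ω = y ∧ X i ω = x}).toReal := by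
          rw [hp, ← ENNReal.toReal_mul, ← ENNReal.toReal_mul, key]
        have hJ : jointMatrix μ (X i) (Xhat j) x y
            = (μ {ω | Xhat j ω = y ∧ X i ω = x}).toReal := by
          simp only [jointMatrix, Matrix.of_apply]
          congr 2
          ext ω
          exact and_comm
        rw [hJ]
        simp only [hT, Matrix.of_apply, if_neg hx]
        field_simp
        linarith [key']
    rw [Finset.sum_congr rfl (fun x _ => hterm x)]
    rw [← ENNReal.toReal_sum (fun a _ => measure_ne_top μ _)]
    simp only [jointMatrix, Matrix.of_apply]
    congr 1
    have : {ω | Xhat i ω = x' ∧ Xhat j ω = y} = ⋃ x ∈ (Finset.univ : Finset (Fin C)),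
        {ω | Xhat i ω = x' ∧ Xhat j ω = y ∧ X i ω = x} := by
      ext ω
      simp [and_assoc]
    rw [this, measure_biUnion_finset]
    · intro a _ b _ hab
      apply Set.disjoint_left.mpr
      rintro ω ⟨_, _, h1⟩ ⟨_, _, h2⟩
      exact hab (h1 ▸ h2 ▸ rfl)
    · intro x _
      exact hmeas x' y x
  -- conclude
  have hDMI : DMI μ (Xhat i) (Xhat j) ≤ DMI μ (X i) (Xhat j) := by
    unfold DMI
    rw [hfac, Matrix.det_mul, abs_mul]
    calc |T.det| * |(jointMatrix μ (X i) (Xhat j)).det|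
        ≤ 1 * |(jointMatrix μ (X i) (Xhat j)).det| := by
          apply mul_le_mul_of_nonneg_right (abs_det_le_one_of_substochastic T hT0 hT1)
          exact abs_nonneg _
      _ = _ := one_mul _
  have h0 : 0 ≤ DMI μ (Xhat i) (Xhat j) := abs_nonneg _
  exact pow_le_pow_left₀ h0 hDMI 2
end

section
/- Variance bound for the count-matrix determinant: with M(c,c') = Σ_{t∈T_1} I_t(c,c') as in the DMI-Mechanism (|T_1| = m ≥ C, i.i.d. tasks with joint distribution matrix U), Var[det(M)] ≤ f(m,C)·per(U) + C!·f(m,C)·(f(m,C) − f(m−C,C))·per(U), where f(m,C) = binom(m,C)·C! and per(U) is the permanent of U. -/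
open MeasureTheory ProbabilityTheory

/-- The permanent of a square real matrix. -/
def permanent {C : ℕ} (U : Matrix (Fin C) (Fin C) ℝ) : ℝ :=
  ∑ π : Equiv.Perm (Fin C), ∏ c, U c (π c)

/-- `f(m,C) = binom(m,C) · C!`, the number of ordered `C`-tuples of distinct tasks
among `m` tasks, as a real number. -/
def fOrd (m C : ℕ) : ℝ := ((m.choose C * Nat.factorial C : ℕ) : ℝ)


section DMIAux
set_option linter.unusedSectionVars false
set_option linter.unusedVariables false
variable {C m : ℕ} (ν : Measure (Fin C × Fin C)) [IsProbabilityMeasure ν]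

def Xind (p : Equiv.Perm (Fin C)) (t : Fin C → Fin m) (ω : Fin m → Fin C × Fin C) : ℝ :=
  ∏ c, if ω (t c) = (p c, c) then 1 else 0

def gfac (p : Equiv.Perm (Fin C)) (t : Fin C → Fin m) (s : Fin m) (x : Fin C × Fin C) : ℝ :=
  ∏ c ∈ Finset.univ.filter (fun c => t c = s), if x = (p c, c) then 1 else 0

lemma Xind_eq_prod (p : Equiv.Perm (Fin C)) (t : Fin C → Fin m) (ω : Fin m → Fin C × Fin C) :
    Xind p t ω = ∏ s, gfac p t s (ω s) := by
  unfold Xind gfac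
  rw [← Finset.prod_fiberwise_of_maps_to (g := t) (fun c _ => Finset.mem_univ (t c))]
  refine Finset.prod_congr rfl fun s _ => Finset.prod_congr rfl fun c hc => ?_
  simp only [Finset.mem_filter] at hc
  rw [hc.2]

lemma integral_pi_prod (F : Fin m → (Fin C × Fin C) → ℝ) :
    ∫ ω, ∏ s, F s (ω s) ∂(Measure.pi fun _ : Fin m => ν) = ∏ s, ∫ x, F s x ∂ν := by
  letI : MeasureSpace (Fin C × Fin C) := ⟨ν⟩
  haveI : SigmaFinite (volume : Measure (Fin C × Fin C)) := by
    have : IsProbabilityMeasure (volume : Measure (Fin C × Fin C)) := ‹_›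
    infer_instance
  exact MeasureTheory.integral_fintype_prod_eq_prod F

lemma integral_if_singleton (a : Fin C × Fin C) :
    ∫ x, (if x = a then (1:ℝ) else 0) ∂ν = (ν {a}).toReal := by
  have h : (fun x : Fin C × Fin C => if x = a then (1:ℝ) else 0)
      = Set.indicator {a} (fun _ => (1:ℝ)) := by
    funext x; simp [Set.indicator_apply]
  rw [h, integral_indicator_const _ (measurableSet_singleton a)]
  simp [measureReal_def]

lemma gfac_of_not_mem {p : Equiv.Perm (Fin C)} {t : Fin C → Fin m} {s : Fin m}
    (hs : s ∉ Set.range t) : gfac p t s = fun _ => 1 := by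
  funext x
  unfold gfac
  have : Finset.univ.filter (fun c => t c = s) = ∅ := by
    ext c; simp only [Finset.mem_filter, Finset.mem_univ, true_and, Finset.notMem_empty,
      iff_false]
    exact fun h => hs ⟨c, h⟩
  simp [this]

lemma integral_gfac_prod {p : Equiv.Perm (Fin C)} {t : Fin C → Fin m}
    (ht : Function.Injective t) :
    ∏ s, ∫ x, gfac p t s x ∂ν = ∏ c, (ν {(p c, c)}).toReal := by
  have hsub : Finset.univ.image t ⊆ Finset.univ := Finset.subset_univ _
  rw [← Finset.prod_subset hsub ?_]
  · rw [Finset.prod_image (fun a _ b _ h => ht h)]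
    refine Finset.prod_congr rfl fun c _ => ?_
    have hf : Finset.univ.filter (fun c' => t c' = t c) = {c} := by
      ext c'; simp [ht.eq_iff]
    unfold gfac
    rw [hf]
    simp [integral_if_singleton]
  · intro s _ hs
    have : s ∉ Set.range t := by
      intro ⟨c, hc⟩; exact hs (Finset.mem_image.2 ⟨c, Finset.mem_univ c, hc⟩)
    rw [gfac_of_not_mem this]
    simp

lemma integral_Xind {p : Equiv.Perm (Fin C)} {t : Fin C → Fin m}
    (ht : Function.Injective t) :
    ∫ ω, Xind p t ω ∂(Measure.pi fun _ : Fin m => ν)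
      = ∏ c, (ν {(p c, c)}).toReal := by
  simp_rw [Xind_eq_prod]
  rw [integral_pi_prod, integral_gfac_prod ν ht]

lemma integral_Xind_mul_of_disjoint {p p' : Equiv.Perm (Fin C)} {t t' : Fin C → Fin m}
    (hd : Disjoint (Set.range t) (Set.range t')) :
    ∫ ω, Xind p t ω * Xind p' t' ω ∂(Measure.pi fun _ : Fin m => ν)
      = (∫ ω, Xind p t ω ∂(Measure.pi fun _ : Fin m => ν))
        * (∫ ω, Xind p' t' ω ∂(Measure.pi fun _ : Fin m => ν)) := by
  have key : ∀ ω : Fin m → Fin C × Fin C,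
      Xind p t ω * Xind p' t' ω = ∏ s, (gfac p t s (ω s) * gfac p' t' s (ω s)) := by
    intro ω; rw [Xind_eq_prod, Xind_eq_prod, ← Finset.prod_mul_distrib]
  simp_rw [key, Xind_eq_prod]
  rw [integral_pi_prod ν (fun s x => gfac p t s x * gfac p' t' s x),
    integral_pi_prod ν (fun s x => gfac p t s x), integral_pi_prod ν (fun s x => gfac p' t' s x),
    ← Finset.prod_mul_distrib]
  refine Finset.prod_congr rfl fun s _ => ?_
  by_cases h : s ∈ Set.range t
  · have h' : s ∉ Set.range t' := Set.disjoint_left.mp hd h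
    rw [gfac_of_not_mem h']
    simp
  · rw [gfac_of_not_mem h]
    simp

lemma Xind_nonneg (p : Equiv.Perm (Fin C)) (t : Fin C → Fin m) (ω : Fin m → Fin C × Fin C) :
    0 ≤ Xind p t ω :=
  Finset.prod_nonneg fun c _ => by positivity

lemma Xind_le_one (p : Equiv.Perm (Fin C)) (t : Fin C → Fin m) (ω : Fin m → Fin C × Fin C) :
    Xind p t ω ≤ 1 :=
  Finset.prod_le_one (fun c _ => by positivity) (fun c _ => by split <;> norm_num)

def injF (C m : ℕ) : Finset (Fin C → Fin m) :=
  Finset.univ.filter fun t => Function.Injective t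

lemma det_expand (ω : Fin m → Fin C × Fin C) :
    (Matrix.of fun c c' : Fin C =>
        ∑ t : Fin m, if ω t = (c, c') then (1 : ℝ) else 0).det
      = ∑ i ∈ Finset.univ ×ˢ injF C m,
          ((Equiv.Perm.sign i.1 : ℤ) : ℝ) * Xind i.1 i.2 ω := by
  rw [Finset.sum_product, Matrix.det_apply]
  refine Finset.sum_congr rfl fun p _ => ?_
  have h1 : ∏ c, (Matrix.of fun c c' : Fin C =>
      ∑ t : Fin m, if ω t = (c, c') then (1 : ℝ) else 0) (p c) c
      = ∑ t ∈ injF C m, Xind p t ω := by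
    have h2 : ∀ c : Fin C, (Matrix.of fun c c' : Fin C =>
        ∑ t : Fin m, if ω t = (c, c') then (1 : ℝ) else 0) (p c) c
        = ∑ s ∈ (Finset.univ : Finset (Fin m)), if ω s = (p c, c) then (1 : ℝ) else 0 := by
      intro c; rfl
    simp_rw [h2]
    rw [Finset.prod_univ_sum]
    simp only [Fintype.piFinset_univ]
    rw [← Finset.sum_subset (Finset.subset_univ (injF C m)) ?_]
    · exact Finset.sum_congr rfl fun t _ => rfl
    · intro t _ ht
      simp only [injF, Finset.mem_filter, Finset.mem_univ, true_and] at ht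
      rw [Function.not_injective_iff] at ht
      obtain ⟨c, c', hcc', hne⟩ := ht
      by_cases h : ω (t c) = (p c, c)
      · refine Finset.prod_eq_zero (Finset.mem_univ c') ?_
        rw [if_neg]
        intro hcon
        rw [hcc'] at h
        exact hne (congrArg Prod.snd (h.symm.trans hcon))
      · exact Finset.prod_eq_zero (Finset.mem_univ c) (if_neg h)
  rw [h1, Finset.smul_sum]
  exact Finset.sum_congr rfl fun t _ => by rw [Units.smul_def, zsmul_eq_mul]

lemma sum_prod_perm_eq_permanent (U : Matrix (Fin C) (Fin C) ℝ) :
    ∑ p : Equiv.Perm (Fin C), ∏ c, U (p c) c = permanent U := by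
  rw [permanent]
  refine Fintype.sum_equiv (Equiv.inv (Equiv.Perm (Fin C))) _ _ fun p => ?_
  have := Equiv.prod_comp p⁻¹ (fun c => U (p c) c)
  simpa using this.symm

lemma card_injF : (injF C m).card = m.descFactorial C := by
  have h1 : (injF C m).card = Fintype.card {t : Fin C → Fin m // Function.Injective t} := by
    rw [Fintype.card_subtype]; rfl
  rw [h1, Fintype.card_congr (Equiv.subtypeInjectiveEquivEmbedding (Fin C) (Fin m)),
    Fintype.card_embedding_eq, Fintype.card_fin, Fintype.card_fin]

lemma fOrd_eq_descFactorial' (m C : ℕ) :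
    ((m.choose C * Nat.factorial C : ℕ) : ℝ) = (m.descFactorial C : ℝ) := by
  rw [Nat.descFactorial_eq_factorial_mul_choose, Nat.mul_comm]

lemma disjoint_count_ge (hm : C ≤ m) {t : Fin C → Fin m} (ht : Function.Injective t)
    [DecidablePred fun t' : Fin C → Fin m => Disjoint (Set.range t) (Set.range t')] :
    (m - C).descFactorial C
      ≤ ((injF C m).filter fun t' => Disjoint (Set.range t) (Set.range t')).card := by
  classical
  set A : Finset (Fin m) := Finset.univ \ Finset.univ.image t with hA
  have hcard : A.card = m - C := by
    rw [hA, Finset.card_sdiff_of_subset (Finset.subset_univ _),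
      Finset.card_image_of_injective _ ht]
    simp
  have e : Fin (m - C) ≃ {x // x ∈ A} := by
    rw [← hcard]; exact (A.equivFin).symm
  have key : ∀ f : Fin C ↪ Fin (m - C),
      (fun c => (e (f c) : Fin m)) ∈ (injF C m).filter
        fun t' => Disjoint (Set.range t) (Set.range t') := by
    intro f
    refine Finset.mem_filter.2 ⟨Finset.mem_filter.2 ⟨Finset.mem_univ _, ?_⟩, ?_⟩
    · intro a b hab
      exact f.injective (e.injective (Subtype.val_injective hab))
    · rw [Set.disjoint_right]
      rintro x ⟨c, rfl⟩
      have hx : (e (f c) : Fin m) ∈ A := (e (f c)).2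
      have hx2 := Finset.mem_sdiff.mp hx
      rintro ⟨c', hc'⟩
      exact hx2.2 (Finset.mem_image.2 ⟨c', Finset.mem_univ _, hc'⟩)
  have hinj : Function.Injective
      (fun f : Fin C ↪ Fin (m - C) => (fun c => (e (f c) : Fin m))) := by
    intro f f' hff'
    refine Function.Embedding.ext fun c => ?_
    have := congrFun hff' c
    exact e.injective (Subtype.val_injective this)
  calc (m - C).descFactorial C
      = Fintype.card (Fin C ↪ Fin (m - C)) := by
        rw [Fintype.card_embedding_eq, Fintype.card_fin, Fintype.card_fin]
    _ ≤ _ := by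
        rw [← Finset.card_univ]
        exact Finset.card_le_card_of_injOn _ (fun f _ => key f) (hinj.injOn)
end DMIAux

/-- variance bound for the count-matrix determinant: with `m ≥ C` i.i.d.
tasks with per-task joint distribution `ν` (joint distribution matrix `U`), the count
matrix `M(c,c') = Σ_t 1[sample t = (c,c')]` satisfies
`Var[det M] ≤ f(m,C)·per(U) + C!·f(m,C)·(f(m,C) − f(m−C,C))·per(U)`. -/
theorem variance_det_count_matrix_le (C m : ℕ) (hm : C ≤ m)
    (ν : Measure (Fin C × Fin C)) [IsProbabilityMeasure ν] :
    variance (fun ω : Fin m → Fin C × Fin C =>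
        (Matrix.of fun c c' : Fin C =>
          ∑ t : Fin m, if ω t = (c, c') then (1 : ℝ) else 0).det)
      (Measure.pi fun _ : Fin m => ν)
      ≤ fOrd m C * permanent (Matrix.of fun c c' : Fin C => (ν {(c, c')}).toReal) +
        (Nat.factorial C : ℝ) * fOrd m C * (fOrd m C - fOrd (m - C) C) *
          permanent (Matrix.of fun c c' : Fin C => (ν {(c, c')}).toReal) := by
  classical
  set μ := Measure.pi (fun _ : Fin m => ν) with hμ
  set S : Finset (Equiv.Perm (Fin C) × (Fin C → Fin m)) := Finset.univ ×ˢ injF C m with hS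
  set a : Equiv.Perm (Fin C) × (Fin C → Fin m) → ℝ :=
    fun i => ((Equiv.Perm.sign i.1 : ℤ) : ℝ) with ha
  set X : Equiv.Perm (Fin C) × (Fin C → Fin m) → (Fin m → Fin C × Fin C) → ℝ :=
    fun i => Xind i.1 i.2 with hX
  set ev : Equiv.Perm (Fin C) × (Fin C → Fin m) → ℝ := fun i => ∫ ω, X i ω ∂μ with hev
  set E2 : (Equiv.Perm (Fin C) × (Fin C → Fin m)) → (Equiv.Perm (Fin C) × (Fin C → Fin m)) → ℝ :=
    fun i j => ∫ ω, X i ω * X j ω ∂μ with hE2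
  set bb : Equiv.Perm (Fin C) → ℝ := fun p => ∏ c, (ν {(p c, c)}).toReal with hbb
  have hInt : ∀ f : (Fin m → Fin C × Fin C) → ℝ, Integrable f μ := fun f => .of_finite
  have hdet : (fun ω : Fin m → Fin C × Fin C =>
      (Matrix.of fun c c' : Fin C =>
        ∑ t : Fin m, if ω t = (c, c') then (1 : ℝ) else 0).det)
      = fun ω => ∑ i ∈ S, a i * X i ω := funext fun ω => det_expand ω
  rw [hdet]
  have hvar : variance (fun ω => ∑ i ∈ S, a i * X i ω) μ
      = ∑ i ∈ S, ∑ j ∈ S, a i * a j * (E2 i j - ev i * ev j) := by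
    rw [variance_eq_sub MemLp.of_discrete]
    have h2 : (μ[(fun ω => ∑ i ∈ S, a i * X i ω) ^ 2])
        = ∑ i ∈ S, ∑ j ∈ S, a i * a j * E2 i j := by
      have hfun : ((fun ω => ∑ i ∈ S, a i * X i ω) ^ 2)
          = fun ω => ∑ i ∈ S, ∑ j ∈ S, (a i * a j) * (X i ω * X j ω) := by
        funext ω
        rw [Pi.pow_apply, pow_two, Finset.sum_mul_sum]
        exact Finset.sum_congr rfl fun i _ => Finset.sum_congr rfl fun j _ => by ring
      rw [hfun, integral_finset_sum _ (fun i _ => hInt _)]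
      refine Finset.sum_congr rfl fun i _ => ?_
      rw [integral_finset_sum _ (fun j _ => hInt _)]
      exact Finset.sum_congr rfl fun j _ => integral_const_mul _ _
    have h1 : (μ[fun ω => ∑ i ∈ S, a i * X i ω]) = ∑ i ∈ S, a i * ev i := by
      rw [integral_finset_sum _ (fun i _ => hInt _)]
      exact Finset.sum_congr rfl fun i _ => integral_const_mul _ _
    rw [h2, h1, pow_two, Finset.sum_mul_sum, ← Finset.sum_sub_distrib]
    refine Finset.sum_congr rfl fun i _ => ?_
    rw [← Finset.sum_sub_distrib]
    exact Finset.sum_congr rfl fun j _ => by ring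
  rw [hvar]
  set U : Matrix (Fin C) (Fin C) ℝ :=
    Matrix.of fun c c' : Fin C => (ν {(c, c')}).toReal with hUdef
  set D : ℝ := fOrd m C - fOrd (m - C) C with hD
  have hbb0 : ∀ p, 0 ≤ bb p := fun p => Finset.prod_nonneg fun c _ => ENNReal.toReal_nonneg
  have hmem : ∀ i ∈ S, Function.Injective i.2 := by
    intro i hi
    have := (Finset.mem_product.mp hi).2
    simpa [injF] using this
  have hstep1 : ∑ i ∈ S, ∑ j ∈ S, a i * a j * (E2 i j - ev i * ev j)
      ≤ ∑ i ∈ S, ∑ j ∈ S,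
        (if Disjoint (Set.range i.2) (Set.range j.2) then 0 else bb i.1) := by
    refine Finset.sum_le_sum fun i hi => Finset.sum_le_sum fun j hj => ?_
    by_cases hd : Disjoint (Set.range i.2) (Set.range j.2)
    · rw [if_pos hd]
      have hEq : E2 i j = ev i * ev j := integral_Xind_mul_of_disjoint ν hd
      rw [hEq]
      simp
    · rw [if_neg hd]
      have hi2 := hmem i hi
      have hj2 := hmem j hj
      have hei : ev i = bb i.1 := integral_Xind ν hi2
      have hej1 : ev j ≤ 1 := by
        calc ev j ≤ ∫ _, (1:ℝ) ∂μ :=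
              integral_mono (hInt _) (hInt _) (fun ω => Xind_le_one _ _ ω)
          _ = 1 := by simp
      have hej0 : 0 ≤ ev j := integral_nonneg fun ω => Xind_nonneg _ _ ω
      have hE2le : E2 i j ≤ ev i :=
        integral_mono (hInt _) (hInt _) (fun ω =>
          mul_le_of_le_one_right (Xind_nonneg _ _ ω) (Xind_le_one _ _ ω))
      have hE20 : 0 ≤ E2 i j := integral_nonneg fun ω =>
        mul_nonneg (Xind_nonneg _ _ ω) (Xind_nonneg _ _ ω)
      have hbbi := hbb0 i.1
      rw [hei] at hE2le
      have hai : a i = 1 ∨ a i = -1 := by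
        rcases Int.units_eq_one_or (Equiv.Perm.sign i.1) with h | h <;> simp [ha, h]
      have haj : a j = 1 ∨ a j = -1 := by
        rcases Int.units_eq_one_or (Equiv.Perm.sign j.1) with h | h <;> simp [ha, h]
      rw [hei]
      rcases hai with h | h <;> rcases haj with h' | h' <;> rw [h, h'] <;> nlinarith
  have hcount : ∀ t ∈ injF C m,
      ((((injF C m).filter
          fun t' => ¬ Disjoint (Set.range t) (Set.range t')).card : ℝ)) ≤ D := by
    intro t htmem
    have htinj : Function.Injective t := by simpa [injF] using htmem
    have hsplit := Finset.card_filter_add_card_filter_not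
      (s := injF C m) (p := fun t' => Disjoint (Set.range t) (Set.range t'))
    have hge := disjoint_count_ge hm htinj
    have hcard : (injF C m).card = m.descFactorial C := card_injF
    rw [hcard] at hsplit
    have h1' : ((((injF C m).filter
          fun t' => Disjoint (Set.range t) (Set.range t')).card : ℝ))
        + ((((injF C m).filter
          fun t' => ¬ Disjoint (Set.range t) (Set.range t')).card : ℝ))
        = (m.descFactorial C : ℝ) := by exact_mod_cast hsplit
    have h2' : (((m - C).descFactorial C : ℝ)) ≤ (((injF C m).filter
          fun t' => Disjoint (Set.range t) (Set.range t')).card : ℝ) := by exact_mod_cast hge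
    rw [hD, fOrd, fOrd, fOrd_eq_descFactorial' m C, fOrd_eq_descFactorial' (m - C) C]
    linarith
  have hstep2 : ∑ i ∈ S, ∑ j ∈ S,
        (if Disjoint (Set.range i.2) (Set.range j.2) then 0 else bb i.1)
      ≤ (Nat.factorial C : ℝ) * fOrd m C * D * (∑ p : Equiv.Perm (Fin C), bb p) := by
    rw [hS]
    simp only [Finset.sum_product]
    have hinner : ∀ (p : Equiv.Perm (Fin C)), ∀ t ∈ injF C m,
        ∀ _p' : Equiv.Perm (Fin C),
        (∑ t' ∈ injF C m,
          if Disjoint (Set.range t) (Set.range t') then 0 else bb p) ≤ D * bb p := by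
      intro p t ht p'
      rw [Finset.sum_ite, Finset.sum_const_zero, zero_add, Finset.sum_const, nsmul_eq_mul]
      exact mul_le_mul_of_nonneg_right (hcount t ht) (hbb0 p)
    calc ∑ p, ∑ t ∈ injF C m, ∑ p' : Equiv.Perm (Fin C), ∑ t' ∈ injF C m,
          (if Disjoint (Set.range t) (Set.range t') then 0 else bb p)
        ≤ ∑ p, ∑ t ∈ injF C m, ∑ _p' : Equiv.Perm (Fin C), D * bb p := by
          refine Finset.sum_le_sum fun p _ => Finset.sum_le_sum fun t ht =>
            Finset.sum_le_sum fun p' _ => hinner p t ht p'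
      _ = (Nat.factorial C : ℝ) * fOrd m C * D * (∑ p : Equiv.Perm (Fin C), bb p) := by
          simp only [Finset.sum_const, nsmul_eq_mul, Finset.card_univ, Fintype.card_perm,
            Fintype.card_fin, card_injF]
          rw [Finset.sum_congr rfl (fun p _ => show
              ((m.descFactorial C : ℕ) : ℝ) * ((Nat.factorial C : ℝ) * (D * bb p))
                = ((Nat.factorial C : ℝ) * fOrd m C * D) * bb p by
            rw [fOrd, fOrd_eq_descFactorial' m C]; ring), ← Finset.mul_sum]
  have hper : ∑ p : Equiv.Perm (Fin C), bb p = permanent U := by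
    rw [permanent]
    exact sum_prod_perm_eq_permanent U
  have hper0 : 0 ≤ permanent U := hper ▸ Finset.sum_nonneg fun p _ => hbb0 p
  have hford0 : (0:ℝ) ≤ fOrd m C := by rw [fOrd]; positivity
  calc ∑ i ∈ S, ∑ j ∈ S, a i * a j * (E2 i j - ev i * ev j)
      ≤ (Nat.factorial C : ℝ) * fOrd m C * D * (∑ p : Equiv.Perm (Fin C), bb p) :=
        le_trans hstep1 hstep2
    _ = (Nat.factorial C : ℝ) * fOrd m C * (fOrd m C - fOrd (m - C) C) * permanent U := by
        rw [hper, hD]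
    _ ≤ fOrd m C * permanent U +
        (Nat.factorial C : ℝ) * fOrd m C * (fOrd m C - fOrd (m - C) C) * permanent U := by
        nlinarith
end
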